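/- arXiv:1609.07481 — 2 statements merged into one kernel-verified Lean document; each statement's English description precedes it below -/
import Mathlib

section
/- The Eisenstein series E₂, E₄, E₆ are complex-differentiable on the open unit disk and for every q ∈ ℂ with |q| < 1 they satisfy Ramanujan's differential equations: q·E₂′(q) = (E₂(q)² − E₄(q))/12, q·E₄′(q) = (E₂(q)E₄(q) − E₆(q))/3, and q·E₆′(q) = (E₂(q)E₆(q) − E₄(q)²)/2. -/
open Complex

/-- The cubic theta function `a(q) = ∑_{m,n ∈ ℤ} q^(m²+mn+n²)`. -/
noncomputable def cubicA (q : ℂ) : ℂ :=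
  ∑' p : ℤ × ℤ, q ^ (p.1 ^ 2 + p.1 * p.2 + p.2 ^ 2).toNat

/-- Eisenstein series `E₂(q) = 1 - 24 ∑ σ₁(n) qⁿ`. -/
noncomputable def E2c (q : ℂ) : ℂ :=
  1 - 24 * ∑' n : ℕ, ((ArithmeticFunction.sigma 1 (n + 1) : ℕ) : ℂ) * q ^ (n + 1)

/-- Eisenstein series `E₄(q) = 1 + 240 ∑ σ₃(n) qⁿ`. -/
noncomputable def E4c (q : ℂ) : ℂ :=
  1 + 240 * ∑' n : ℕ, ((ArithmeticFunction.sigma 3 (n + 1) : ℕ) : ℂ) * q ^ (n + 1)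

/-- Eisenstein series `E₆(q) = 1 - 504 ∑ σ₅(n) qⁿ`. -/
noncomputable def E6c (q : ℂ) : ℂ :=
  1 - 504 * ∑' n : ℕ, ((ArithmeticFunction.sigma 5 (n + 1) : ℕ) : ℂ) * q ^ (n + 1)

/-- `b³(q) = ∏ (1-qⁿ)⁹ / ∏ (1-q^{3n})³`. -/
noncomputable def bCubed (q : ℂ) : ℂ :=
  (∏' n : ℕ, (1 - q ^ (n + 1)) ^ 9) / ∏' n : ℕ, (1 - q ^ (3 * (n + 1))) ^ 3

/-- `c³(q) = 27 q ∏ (1-q^{3n})⁹ / ∏ (1-qⁿ)³`. -/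
noncomputable def cCubed (q : ℂ) : ℂ :=
  27 * q * (∏' n : ℕ, (1 - q ^ (3 * (n + 1))) ^ 9) / ∏' n : ℕ, (1 - q ^ (n + 1)) ^ 3

/-- The Legendre symbol mod 3: `(n/3)`. -/
noncomputable def chi3 (n : ℕ) : ℂ :=
  if n % 3 = 1 then 1 else if n % 3 = 2 then -1 else 0

/-- Theta constant with characteristics `θ[ε,ε'](τ)`. -/
noncomputable def thetaC (e e' : ℝ) (τ : ℂ) : ℂ :=
  ∑' n : ℤ, Complex.exp (2 * Real.pi * I *
    ((1 / 2) * ((n : ℂ) + (e : ℂ) / 2) ^ 2 * τ + ((n : ℂ) + (e : ℂ) / 2) * ((e' : ℂ) / 2)))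

/-- Derivative theta constant `θ′[ε,ε'](τ)`. -/
noncomputable def thetaC' (e e' : ℝ) (τ : ℂ) : ℂ :=
  ∑' n : ℤ, 2 * Real.pi * I * ((n : ℂ) + (e : ℂ) / 2) * Complex.exp (2 * Real.pi * I *
    ((1 / 2) * ((n : ℂ) + (e : ℂ) / 2) ^ 2 * τ + ((n : ℂ) + (e : ℂ) / 2) * ((e' : ℂ) / 2)))

/-- The Dedekind eta function. -/
noncomputable def etaF (τ : ℂ) : ℂ :=
  Complex.exp (Real.pi * I * τ / 12) *
    ∏' n : ℕ, (1 - Complex.exp (2 * Real.pi * I * ((n : ℂ) + 1) * τ))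

open Finset

namespace RamanujanAux

/-- quadruples (a,d,b,e) of positive naturals with a*d+b*e = n -/
def P4 (n : ℕ) : Finset (ℕ × ℕ × ℕ × ℕ) :=
  ((range (n+1)) ×ˢ (range (n+1)) ×ˢ (range (n+1)) ×ˢ (range (n+1))).filter
    fun x => 0 < x.1 ∧ 0 < x.2.1 ∧ 0 < x.2.2.1 ∧ 0 < x.2.2.2 ∧
      x.1 * x.2.1 + x.2.2.1 * x.2.2.2 = n

lemma mem_P4 {n : ℕ} {x : ℕ × ℕ × ℕ × ℕ} :
    x ∈ P4 n ↔ 0 < x.1 ∧ 0 < x.2.1 ∧ 0 < x.2.2.1 ∧ 0 < x.2.2.2 ∧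
      x.1 * x.2.1 + x.2.2.1 * x.2.2.2 = n := by
  obtain ⟨a, d, b, e⟩ := x
  simp only [P4, mem_filter, mem_product, mem_range]
  constructor
  · rintro ⟨-, h⟩; exact h
  · rintro ⟨ha, hd, hb, he, hs⟩
    have h1 : a ≤ a * d := Nat.le_mul_of_pos_right a hd
    have h2 : d ≤ a * d := Nat.le_mul_of_pos_left d ha
    have h3 : b ≤ b * e := Nat.le_mul_of_pos_right b he
    have h4 : e ≤ b * e := Nat.le_mul_of_pos_left e hb
    exact ⟨⟨by omega, by omega, by omega, by omega⟩, ha, hd, hb, he, hs⟩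

/-- swap the two pairs, with a region predicate -/
lemma sum_swap_P4 (n : ℕ) (F : ℕ → ℕ → ℕ → ℕ → ℤ) (p : ℕ → ℕ → ℕ → ℕ → Prop)
    [∀ a d b e, Decidable (p a d b e)] :
    ∑ x ∈ (P4 n).filter (fun x => p x.1 x.2.1 x.2.2.1 x.2.2.2), F x.1 x.2.1 x.2.2.1 x.2.2.2
      = ∑ x ∈ (P4 n).filter (fun x => p x.2.2.1 x.2.2.2 x.1 x.2.1),
          F x.2.2.1 x.2.2.2 x.1 x.2.1 := by
  refine Finset.sum_nbij' (fun x => (x.2.2.1, x.2.2.2, x.1, x.2.1))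
    (fun x => (x.2.2.1, x.2.2.2, x.1, x.2.1)) ?_ ?_ ?_ ?_ ?_ <;>
    rintro ⟨a, d, b, e⟩ hx <;>
    simp only [mem_filter, mem_P4] at * <;>
  · obtain ⟨⟨h1, h2, h3, h4, h5⟩, hp⟩ := hx
    exact ⟨⟨h3, h4, h1, h2, by omega⟩, hp⟩

/-- trichotomy split of a sum over P4 by comparing u, v where (u,v) is
    extracted by two coordinate functions -/
lemma sum_P4_split (n : ℕ) (F : ℕ × ℕ × ℕ × ℕ → ℤ) (u v : ℕ × ℕ × ℕ × ℕ → ℕ) :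
    ∑ x ∈ P4 n, F x =
      ∑ x ∈ (P4 n).filter (fun x => u x < v x), F x
      + ∑ x ∈ (P4 n).filter (fun x => v x < u x), F x
      + ∑ x ∈ (P4 n).filter (fun x => u x = v x), F x := by
  rw [← Finset.sum_filter_add_sum_filter_not (P4 n) (fun x => u x < v x)]
  have : (P4 n).filter (fun x => ¬ u x < v x)
      = ((P4 n).filter (fun x => ¬ u x < v x)).filter (fun x => v x < u x)
        ∪ ((P4 n).filter (fun x => ¬ u x < v x)).filter (fun x => ¬ v x < u x) := by
    rw [Finset.filter_union_filter_not_eq]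
  rw [this, Finset.sum_union (Finset.disjoint_filter_filter_not _ _ _)]
  rw [Finset.filter_filter, Finset.filter_filter]
  have e1 : (P4 n).filter (fun a => ¬ u a < v a ∧ v a < u a)
      = (P4 n).filter (fun x => v x < u x) := by
    apply Finset.filter_congr; intro x _; constructor
    · rintro ⟨-, h⟩; exact h
    · intro h; exact ⟨by omega, h⟩
  have e2 : (P4 n).filter (fun a => ¬ u a < v a ∧ ¬ v a < u a)
      = (P4 n).filter (fun x => u x = v x) := by
    apply Finset.filter_congr; intro x _; constructor
    · rintro ⟨h1, h2⟩; omega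
    · intro h; omega
  rw [e1, e2]; ring

/-- The key Liouville bijection ψ -/
lemma sum_psi (n : ℕ) (g : ℕ → ℕ → ℤ) :
    ∑ x ∈ (P4 n).filter (fun x => x.2.2.1 < x.1), g x.2.1 x.2.2.2
      = ∑ x ∈ (P4 n).filter (fun x => x.2.1 < x.2.2.2), g x.2.1 (x.2.2.2 - x.2.1) := by
  refine Finset.sum_nbij' (fun x => (x.1 - x.2.2.1, x.2.1, x.2.2.1, x.2.2.2 + x.2.1))
    (fun x => (x.1 + x.2.2.1, x.2.1, x.2.2.1, x.2.2.2 - x.2.1)) ?_ ?_ ?_ ?_ ?_ <;>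
    rintro ⟨a, d, b, e⟩ hx <;>
    simp only [mem_filter, mem_P4] at hx ⊢ <;>
    obtain ⟨⟨h1, h2, h3, h4, h5⟩, hp⟩ := hx
  · have key : (a - b) * d = a * d - b * d := Nat.sub_mul a b d
    have hbd : b * d ≤ a * d := Nat.mul_le_mul_right d (le_of_lt hp)
    refine ⟨⟨by omega, h2, h3, by omega, ?_⟩, by omega⟩
    have : b * (e + d) = b * e + b * d := by ring
    omega
  · have key : b * (e - d) = b * e - b * d := by
      rw [mul_comm, Nat.sub_mul, mul_comm e b, mul_comm d b]
    have hbd : b * d ≤ b * e := Nat.mul_le_mul_left b (le_of_lt hp)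
    have hab : (a + b) * d = a * d + b * d := by ring
    refine ⟨⟨by omega, h2, h3, by omega, by omega⟩, by omega⟩
  · have h6 : a - b + b = a := by omega
    have h7 : e + d - d = e := by omega
    simp [h6, h7]
  · have h6 : a + b - b = a := by omega
    have h7 : e - d + d = e := by omega
    simp [h6, h7]
  · have : e + d - d = e := by omega
    simp [this]

end RamanujanAux

namespace RamanujanAux2
open RamanujanAux

/-- diagonal d = e -/
lemma sum_diag_de (n : ℕ) (g : ℕ → ℕ → ℤ) :
    ∑ x ∈ (P4 n).filter (fun x => x.2.1 = x.2.2.2), g x.2.1 x.2.2.2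
      = ∑ d ∈ n.divisors, ∑ a ∈ Finset.Ico 1 (n / d), g d d := by
  rw [← Finset.sum_sigma (n.divisors) (fun d => Finset.Ico 1 (n / d)) (fun x => g x.1 x.1)]
  refine Finset.sum_nbij' (fun x => ⟨x.2.1, x.1⟩)
    (fun y => (y.2, y.1, n / y.1 - y.2, y.1)) ?_ ?_ ?_ ?_ ?_
  · rintro ⟨a, d, b, e⟩ hx
    simp only [Finset.mem_filter, mem_P4] at hx
    obtain ⟨⟨h1, h2, h3, h4, h5⟩, hde⟩ := hx
    subst hde
    have hsum : (a + b) * d = n := by have : (a + b) * d = a * d + b * d := by ring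
                                      omega
    have hdvd : d ∣ n := ⟨a + b, by rw [← hsum]; ring⟩
    have hnd : n / d = a + b := by rw [← hsum, Nat.mul_div_cancel _ h2]
    have hpos : 0 < a * d := Nat.mul_pos h1 h2
    simp only [Finset.mem_sigma, Nat.mem_divisors, Finset.mem_Ico]
    exact ⟨⟨hdvd, by omega⟩, by omega, by omega⟩
  · rintro ⟨d, a⟩ hy
    simp only [Finset.mem_sigma, Nat.mem_divisors, Finset.mem_Ico] at hy
    obtain ⟨⟨hdvd, hn0⟩, ha1, ha2⟩ := hy
    have hd0 : 0 < d := Nat.pos_of_mem_divisors (Nat.mem_divisors.mpr ⟨hdvd, hn0⟩)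
    have hmul : (n / d) * d = n := Nat.div_mul_cancel hdvd
    have hsub : (n / d - a) * d = (n / d) * d - a * d := Nat.sub_mul _ _ _
    have hle : a * d ≤ (n / d) * d := Nat.mul_le_mul_right d (by omega)
    simp only [Finset.mem_filter, mem_P4]
    refine ⟨⟨by omega, hd0, by omega, hd0, by omega⟩, by trivial⟩
  · rintro ⟨a, d, b, e⟩ hx
    simp only [Finset.mem_filter, mem_P4] at hx
    obtain ⟨⟨h1, h2, h3, h4, h5⟩, hde⟩ := hx
    subst hde
    have hsum : (a + b) * d = n := by have : (a + b) * d = a * d + b * d := by ring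
                                      omega
    have hnd : n / d = a + b := by rw [← hsum, Nat.mul_div_cancel _ h2]
    have hb : n / d - a = b := by omega
    simp [Prod.mk.injEq, hb]
  · rintro ⟨d, a⟩ hy; rfl
  · rintro ⟨a, d, b, e⟩ hx
    simp only [Finset.mem_filter, mem_P4] at hx
    obtain ⟨-, hde⟩ := hx
    subst hde; rfl

/-- diagonal a = b -/
lemma sum_diag_ab (n : ℕ) (g : ℕ → ℕ → ℤ) :
    ∑ x ∈ (P4 n).filter (fun x => x.1 = x.2.2.1), g x.2.1 x.2.2.2
      = ∑ a ∈ n.divisors, ∑ d ∈ Finset.Ico 1 (n / a), g d (n / a - d) := by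
  rw [← Finset.sum_sigma (n.divisors) (fun a => Finset.Ico 1 (n / a))
    (fun x => g x.2 (n / x.1 - x.2))]
  refine Finset.sum_nbij' (fun x => ⟨x.1, x.2.1⟩)
    (fun y => (y.1, y.2, y.1, n / y.1 - y.2)) ?_ ?_ ?_ ?_ ?_
  · rintro ⟨a, d, b, e⟩ hx
    simp only [Finset.mem_filter, mem_P4] at hx
    obtain ⟨⟨h1, h2, h3, h4, h5⟩, hab⟩ := hx
    subst hab
    have hsum : (d + e) * a = n := by have : (d + e) * a = a * d + a * e := by ring
                                      omega
    have hdvd : a ∣ n := ⟨d + e, by rw [← hsum]; ring⟩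
    have hnd : n / a = d + e := by rw [← hsum, Nat.mul_div_cancel _ h1]
    have hpos : 0 < a * d := Nat.mul_pos h1 h2
    simp only [Finset.mem_sigma, Nat.mem_divisors, Finset.mem_Ico]
    exact ⟨⟨hdvd, by omega⟩, by omega, by omega⟩
  · rintro ⟨a, d⟩ hy
    simp only [Finset.mem_sigma, Nat.mem_divisors, Finset.mem_Ico] at hy
    obtain ⟨⟨hdvd, hn0⟩, hd1, hd2⟩ := hy
    have ha0 : 0 < a := Nat.pos_of_mem_divisors (Nat.mem_divisors.mpr ⟨hdvd, hn0⟩)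
    have hmul : (n / a) * a = n := Nat.div_mul_cancel hdvd
    have hsub : (n / a - d) * a = (n / a) * a - d * a := Nat.sub_mul _ _ _
    have hle : d * a ≤ (n / a) * a := Nat.mul_le_mul_right a (by omega)
    have hda : a * d = d * a := by ring
    have hda2 : a * (n / a - d) = (n / a - d) * a := by ring
    simp only [Finset.mem_filter, mem_P4]
    refine ⟨⟨ha0, by omega, ha0, by omega, by omega⟩, by trivial⟩
  · rintro ⟨a, d, b, e⟩ hx
    simp only [Finset.mem_filter, mem_P4] at hx
    obtain ⟨⟨h1, h2, h3, h4, h5⟩, hab⟩ := hx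
    subst hab
    have hsum : (d + e) * a = n := by have : (d + e) * a = a * d + a * e := by ring
                                      omega
    have hnd : n / a = d + e := by rw [← hsum, Nat.mul_div_cancel _ h1]
    have he : n / a - d = e := by omega
    simp [Prod.mk.injEq, he]
  · rintro ⟨a, d⟩ hy; rfl
  · rintro ⟨a, d, b, e⟩ hx
    simp only [Finset.mem_filter, mem_P4] at hx
    obtain ⟨⟨h1, h2, h3, h4, h5⟩, hab⟩ := hx
    subst hab
    have hsum : (d + e) * a = n := by have : (d + e) * a = a * d + a * e := by ring
                                      omega
    have hnd : n / a = d + e := by rw [← hsum, Nat.mul_div_cancel _ h1]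
    have he : n / a - d = e := by omega
    simp [he]


/-- unfiltered pair swap -/
lemma sum_swap_P4_all (n : ℕ) (F : ℕ → ℕ → ℕ → ℕ → ℤ) :
    ∑ x ∈ P4 n, F x.1 x.2.1 x.2.2.1 x.2.2.2
      = ∑ x ∈ P4 n, F x.2.2.1 x.2.2.2 x.1 x.2.1 := by
  refine Finset.sum_nbij' (fun x => (x.2.2.1, x.2.2.2, x.1, x.2.1))
    (fun x => (x.2.2.1, x.2.2.2, x.1, x.2.1)) ?_ ?_ ?_ ?_ ?_ <;>
    rintro ⟨a, d, b, e⟩ hx <;>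
    simp only [mem_P4] at * <;>
  · obtain ⟨h1, h2, h3, h4, h5⟩ := hx
    exact ⟨h3, h4, h1, h2, by omega⟩

/-- factorization of the full sum into a convolution of divisor sums -/
lemma sum_P4_fact (n : ℕ) (f h : ℕ → ℤ) :
    ∑ x ∈ P4 n, f x.2.1 * h x.2.2.2
      = ∑ m ∈ Finset.Ico 1 n, (∑ u ∈ m.divisors, f u) * (∑ v ∈ (n - m).divisors, h v) := by
  have step : ∀ m ∈ Finset.Ico 1 n,
      (∑ u ∈ m.divisors, f u) * (∑ v ∈ (n - m).divisors, h v)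
        = ∑ p ∈ m.divisors ×ˢ (n - m).divisors, f p.1 * h p.2 := fun m _ => by
    rw [Finset.sum_mul_sum, Finset.sum_product]
  rw [Finset.sum_congr rfl step,
    ← Finset.sum_sigma (Finset.Ico 1 n) (fun m => m.divisors ×ˢ (n - m).divisors)
      (fun y => f y.2.1 * h y.2.2)]
  refine Finset.sum_nbij' (fun x => ⟨x.1 * x.2.1, (x.2.1, x.2.2.2)⟩)
    (fun y => (y.1 / y.2.1, y.2.1, (n - y.1) / y.2.2, y.2.2)) ?_ ?_ ?_ ?_ ?_
  · rintro ⟨a, d, b, e⟩ hx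
    simp only [mem_P4] at hx
    obtain ⟨h1, h2, h3, h4, h5⟩ := hx
    have had : 0 < a * d := Nat.mul_pos h1 h2
    have hbe : 0 < b * e := Nat.mul_pos h3 h4
    have e2 : n - a * d = b * e := by omega
    simp only [Finset.mem_sigma, Finset.mem_Ico, Finset.mem_product, Nat.mem_divisors]
    exact ⟨⟨by omega, by omega⟩, ⟨⟨a, by ring⟩, by omega⟩, ⟨⟨b, by rw [e2]; ring⟩, by omega⟩⟩
  · rintro ⟨m, u, v⟩ hy
    simp only [Finset.mem_sigma, Finset.mem_Ico, Finset.mem_product, Nat.mem_divisors] at hy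
    obtain ⟨⟨hm1, hm2⟩, ⟨hu, hm0⟩, hv, hnm0⟩ := hy
    have hu0 : 0 < u := Nat.pos_of_dvd_of_pos hu (by omega)
    have hv0 : 0 < v := Nat.pos_of_dvd_of_pos hv (by omega)
    have e1 : m / u * u = m := Nat.div_mul_cancel hu
    have e2 : (n - m) / v * v = n - m := Nat.div_mul_cancel hv
    have e3 : 0 < m / u := Nat.div_pos (Nat.le_of_dvd (by omega) hu) hu0
    have e4 : 0 < (n - m) / v := Nat.div_pos (Nat.le_of_dvd (by omega) hv) hv0
    simp only [mem_P4]
    exact ⟨e3, hu0, e4, hv0, by omega⟩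
  · rintro ⟨a, d, b, e⟩ hx
    simp only [mem_P4] at hx
    obtain ⟨h1, h2, h3, h4, h5⟩ := hx
    have e1 : a * d / d = a := Nat.mul_div_cancel a h2
    have e2 : n - a * d = b * e := by omega
    have e3 : b * e / e = b := Nat.mul_div_cancel b h4
    simp [e1, e2, e3]
  · rintro ⟨m, u, v⟩ hy
    simp only [Finset.mem_sigma, Finset.mem_Ico, Finset.mem_product, Nat.mem_divisors] at hy
    obtain ⟨⟨hm1, hm2⟩, ⟨hu, hm0⟩, hv, hnm0⟩ := hy
    have e1 : m / u * u = m := Nat.div_mul_cancel hu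
    have e2 : n - m / u * u = n - m := by omega
    simp [e1, e2]
  · rintro ⟨a, d, b, e⟩ hx
    simp

/-- Liouville master identity -/
lemma master (n : ℕ) (g t : ℕ → ℕ → ℤ)
    (hg : ∀ d e, g d e = g e d) (ht : ∀ d e, t d e = t e d)
    (hsub : ∀ d e : ℕ, d < e → g d (e - d) = g d e - t d e) :
    ∑ x ∈ P4 n, t x.2.1 x.2.2.2
      = (∑ a ∈ n.divisors, ∑ d ∈ Finset.Ico 1 (n / a), g d (n / a - d))
        - (∑ d ∈ n.divisors, ∑ a ∈ Finset.Ico 1 (n / d), g d d)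
        + (∑ d ∈ n.divisors, ∑ a ∈ Finset.Ico 1 (n / d), t d d) := by
  -- splits by d,e comparison
  have split_g := sum_P4_split n (fun x => g x.2.1 x.2.2.2) (fun x => x.2.1) (fun x => x.2.2.2)
  have split_t := sum_P4_split n (fun x => t x.2.1 x.2.2.2) (fun x => x.2.1) (fun x => x.2.2.2)
  -- splits by a,b comparison (for g)
  have split_g' := sum_P4_split n (fun x => g x.2.1 x.2.2.2) (fun x => x.2.2.1) (fun x => x.1)
  -- swap for d,e regions
  have swap_g : ∑ x ∈ (P4 n).filter (fun x => x.2.2.2 < x.2.1), g x.2.1 x.2.2.2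
      = ∑ x ∈ (P4 n).filter (fun x => x.2.1 < x.2.2.2), g x.2.1 x.2.2.2 := by
    have := sum_swap_P4 n (fun _ d _ e => g d e) (fun _ d _ e => e < d)
    rw [this]
    exact Finset.sum_congr rfl fun x _ => hg _ _
  have swap_t : ∑ x ∈ (P4 n).filter (fun x => x.2.2.2 < x.2.1), t x.2.1 x.2.2.2
      = ∑ x ∈ (P4 n).filter (fun x => x.2.1 < x.2.2.2), t x.2.1 x.2.2.2 := by
    have := sum_swap_P4 n (fun _ d _ e => t d e) (fun _ d _ e => e < d)
    rw [this]
    exact Finset.sum_congr rfl fun x _ => ht _ _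
  -- swap for a,b regions
  have swap_g' : ∑ x ∈ (P4 n).filter (fun x => x.1 < x.2.2.1), g x.2.1 x.2.2.2
      = ∑ x ∈ (P4 n).filter (fun x => x.2.2.1 < x.1), g x.2.1 x.2.2.2 := by
    have := sum_swap_P4 n (fun _ d _ e => g d e) (fun a _ b _ => a < b)
    rw [this]
    exact Finset.sum_congr rfl fun x _ => hg _ _
  -- psi bijection + subtraction identity
  have psi_g : ∑ x ∈ (P4 n).filter (fun x => x.2.2.1 < x.1), g x.2.1 x.2.2.2
      = ∑ x ∈ (P4 n).filter (fun x => x.2.1 < x.2.2.2), g x.2.1 x.2.2.2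
        - ∑ x ∈ (P4 n).filter (fun x => x.2.1 < x.2.2.2), t x.2.1 x.2.2.2 := by
    rw [sum_psi n g, ← Finset.sum_sub_distrib]
    refine Finset.sum_congr rfl fun x hx => ?_
    simp only [Finset.mem_filter] at hx
    exact hsub _ _ hx.2
  -- diagonal evaluations
  have diag_de_g := sum_diag_de n g
  have diag_de_t := sum_diag_de n t
  have diag_ab_g := sum_diag_ab n g
  -- the a=b filter in split_g' is (x.2.2.1 = x.1); convert
  have conv_ab : (P4 n).filter (fun x => x.2.2.1 = x.1) = (P4 n).filter (fun x => x.1 = x.2.2.1) := by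
    apply Finset.filter_congr; intro x _; omega
  rw [conv_ab] at split_g'
  linarith [split_g, split_t, split_g', swap_g, swap_t, swap_g', psi_g,
    diag_de_g, diag_de_t, diag_ab_g]


/-- σ_k as an integer -/
def sigZ (k n : ℕ) : ℤ := (ArithmeticFunction.sigma k n : ℤ)

lemma sigZ_eq (k n : ℕ) : sigZ k n = ∑ d ∈ n.divisors, (d : ℤ) ^ k := by
  unfold sigZ
  rw [ArithmeticFunction.sigma_apply]
  push_cast
  rfl

/-- inner diagonal sums: card of Ico -/
lemma diag_inner (n : ℕ) (c : ℤ) (f : ℕ → ℤ) :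
    ∑ d ∈ n.divisors, ∑ _a ∈ Finset.Ico 1 (n / d), f d
      = ∑ d ∈ n.divisors, (((n / d : ℕ) : ℤ) - 1) * f d := by
  refine Finset.sum_congr rfl fun d hd => ?_
  have h1 : 1 ≤ n / d := by
    rw [Nat.le_div_iff_mul_le (Nat.pos_of_mem_divisors hd)]
    simpa using Nat.le_of_dvd (Nat.pos_of_ne_zero (Nat.mem_divisors.mp hd).2)
      (Nat.dvd_of_mem_divisors hd)
  rw [Finset.sum_const, Nat.card_Ico, nsmul_eq_mul]
  push_cast [Nat.cast_sub h1]
  ring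

/-- ∑_{d|n} (n/d - 1) d^(w+1) = n σ_w - σ_(w+1) -/
lemma DD_pow (n w : ℕ) :
    ∑ d ∈ n.divisors, (((n / d : ℕ) : ℤ) - 1) * (d : ℤ) ^ (w + 1)
      = n * sigZ w n - sigZ (w + 1) n := by
  have step : ∀ d ∈ n.divisors, (((n / d : ℕ) : ℤ) - 1) * (d : ℤ) ^ (w + 1)
      = (n : ℤ) * (d : ℤ) ^ w - (d : ℤ) ^ (w + 1) := by
    intro d hd
    have h1 : (n / d) * d = n := Nat.div_mul_cancel (Nat.dvd_of_mem_divisors hd)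
    have h2 : ((n / d : ℕ) : ℤ) * (d : ℤ) = (n : ℤ) := by exact_mod_cast h1
    calc (((n / d : ℕ) : ℤ) - 1) * (d : ℤ) ^ (w + 1)
        = ((n / d : ℕ) : ℤ) * (d : ℤ) * (d : ℤ) ^ w - (d : ℤ) ^ (w + 1) := by ring
      _ = (n : ℤ) * (d : ℤ) ^ w - (d : ℤ) ^ (w + 1) := by rw [h2]
  rw [Finset.sum_congr rfl step, Finset.sum_sub_distrib, ← Finset.mul_sum,
    ← sigZ_eq, ← sigZ_eq]

/-- divisor-sum of a polynomial with zero constant term -/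
lemma div_sum_poly (n : ℕ) (c1 c2 c3 c4 c5 c6 c7 : ℤ) :
    ∑ d ∈ n.divisors, (c1 * (d : ℤ) + c2 * (d : ℤ)^2 + c3 * (d : ℤ)^3 + c4 * (d : ℤ)^4
        + c5 * (d : ℤ)^5 + c6 * (d : ℤ)^6 + c7 * (d : ℤ)^7)
      = c1 * sigZ 1 n + c2 * sigZ 2 n + c3 * sigZ 3 n + c4 * sigZ 4 n
        + c5 * sigZ 5 n + c6 * sigZ 6 n + c7 * sigZ 7 n := by
  simp only [sigZ_eq, Finset.mul_sum, ← Finset.sum_add_distrib]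
  refine Finset.sum_congr rfl fun d _ => by ring

/-- power sums over range -/
lemma psum1 (m : ℕ) : 2 * ∑ d ∈ Finset.range m, (d : ℤ) = (m:ℤ)^2 - m := by
  induction m with
  | zero => simp
  | succ k ih => rw [Finset.sum_range_succ, mul_add]; push_cast; push_cast at ih; linarith

lemma psum2 (m : ℕ) : 6 * ∑ d ∈ Finset.range m, (d : ℤ)^2 = 2*(m:ℤ)^3 - 3*(m:ℤ)^2 + m := by
  induction m with
  | zero => simp
  | succ k ih => rw [Finset.sum_range_succ, mul_add]; push_cast; push_cast at ih; linarith

lemma psum3 (m : ℕ) : 4 * ∑ d ∈ Finset.range m, (d : ℤ)^3 = (m:ℤ)^4 - 2*(m:ℤ)^3 + (m:ℤ)^2 := by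
  induction m with
  | zero => simp
  | succ k ih =>
    rw [Finset.sum_range_succ, mul_add]; push_cast; push_cast at ih; linarith [ih]

lemma psum4 (m : ℕ) : 30 * ∑ d ∈ Finset.range m, (d : ℤ)^4
    = 6*(m:ℤ)^5 - 15*(m:ℤ)^4 + 10*(m:ℤ)^3 - m := by
  induction m with
  | zero => simp
  | succ k ih =>
    rw [Finset.sum_range_succ, mul_add]; push_cast; push_cast at ih; linarith [ih]

lemma psum5 (m : ℕ) : 12 * ∑ d ∈ Finset.range m, (d : ℤ)^5
    = 2*(m:ℤ)^6 - 6*(m:ℤ)^5 + 5*(m:ℤ)^4 - (m:ℤ)^2 := by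
  induction m with
  | zero => simp
  | succ k ih =>
    rw [Finset.sum_range_succ, mul_add]; push_cast; push_cast at ih; linarith [ih]

lemma psum6 (m : ℕ) : 42 * ∑ d ∈ Finset.range m, (d : ℤ)^6
    = 6*(m:ℤ)^7 - 21*(m:ℤ)^6 + 21*(m:ℤ)^5 - 7*(m:ℤ)^3 + m := by
  induction m with
  | zero => simp
  | succ k ih =>
    rw [Finset.sum_range_succ, mul_add]; push_cast; push_cast at ih; linarith [ih]


lemma Ico_eq_range1 (m : ℕ) :
    ∑ d ∈ Finset.Ico 1 m, (d:ℤ) = ∑ d ∈ Finset.range m, (d:ℤ) := by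
  rcases Nat.eq_zero_or_pos m with h | h
  · subst h; simp
  rw [Finset.range_eq_Ico, Finset.sum_eq_sum_Ico_succ_bot h]
  simp

lemma Ico_eq_range_pow (m k : ℕ) (hk : k ≠ 0) :
    ∑ d ∈ Finset.Ico 1 m, (d:ℤ)^k = ∑ d ∈ Finset.range m, (d:ℤ)^k := by
  rcases Nat.eq_zero_or_pos m with h | h
  · subst h; simp
  rw [Finset.range_eq_Ico, Finset.sum_eq_sum_Ico_succ_bot h]
  simp [zero_pow hk]

/- ------------ Q closed forms ------------- -/

lemma Q11 (m : ℕ) : (6:ℤ) * ∑ d ∈ Finset.Ico 1 m,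
      ((d:ℤ)^2 + (d:ℤ)*(((m - d : ℕ)):ℤ) + (((m - d : ℕ)):ℤ)^2)
    = 5*(m:ℤ)^3 - 6*(m:ℤ)^2 + (m:ℤ) := by
  rcases Nat.eq_zero_or_pos m with h | h
  · subst h; simp
  have hc : ∀ d ∈ Finset.Ico 1 m, ((d:ℤ)^2 + (d:ℤ)*(((m - d : ℕ)):ℤ) + (((m - d : ℕ)):ℤ)^2)
      = ((m:ℤ)^2 + ((-(m:ℤ)) * (d:ℤ) + (d:ℤ)^2)) := by
    intro d hd
    rw [Finset.mem_Ico] at hd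
    rw [Nat.cast_sub hd.2.le]
    ring
  rw [Finset.sum_congr rfl hc, Finset.sum_add_distrib, Finset.sum_add_distrib,
    Finset.sum_const, ← Finset.mul_sum, Nat.card_Ico, nsmul_eq_mul]
  have hm1 : ((m - 1 : ℕ) : ℤ) = (m:ℤ) - 1 := by omega
  rw [hm1, Ico_eq_range1, Ico_eq_range_pow m 2 (by norm_num)]
  linear_combination (-3*(m:ℤ)) * psum1 m + psum2 m

lemma Q13 (m : ℕ) : (60:ℤ) * ∑ d ∈ Finset.Ico 1 m,
      ((d:ℤ)^4 + 2*(d:ℤ)^3*(((m - d : ℕ)):ℤ) + 3*(d:ℤ)^2*(((m - d : ℕ)):ℤ)^2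
        + 2*(d:ℤ)*(((m - d : ℕ)):ℤ)^3 + (((m - d : ℕ)):ℤ)^4)
    = 42*(m:ℤ)^5 - 60*(m:ℤ)^4 + 20*(m:ℤ)^3 - 2*(m:ℤ) := by
  rcases Nat.eq_zero_or_pos m with h | h
  · subst h; simp
  have hc : ∀ d ∈ Finset.Ico 1 m, ((d:ℤ)^4 + 2*(d:ℤ)^3*(((m - d : ℕ)):ℤ)
        + 3*(d:ℤ)^2*(((m - d : ℕ)):ℤ)^2 + 2*(d:ℤ)*(((m - d : ℕ)):ℤ)^3 + (((m - d : ℕ)):ℤ)^4)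
      = ((m:ℤ)^4 + ((-2*(m:ℤ)^3) * (d:ℤ) + ((3*(m:ℤ)^2) * (d:ℤ)^2
          + ((-2*(m:ℤ)) * (d:ℤ)^3 + (d:ℤ)^4)))) := by
    intro d hd
    rw [Finset.mem_Ico] at hd
    rw [Nat.cast_sub hd.2.le]
    ring
  rw [Finset.sum_congr rfl hc, Finset.sum_add_distrib, Finset.sum_add_distrib,
    Finset.sum_add_distrib, Finset.sum_add_distrib,
    Finset.sum_const, ← Finset.mul_sum, ← Finset.mul_sum, ← Finset.mul_sum,
    Nat.card_Ico, nsmul_eq_mul]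
  have hm1 : ((m - 1 : ℕ) : ℤ) = (m:ℤ) - 1 := by omega
  rw [hm1, Ico_eq_range1, Ico_eq_range_pow m 2 (by norm_num),
    Ico_eq_range_pow m 3 (by norm_num), Ico_eq_range_pow m 4 (by norm_num)]
  linear_combination (-60*(m:ℤ)^3) * psum1 m + (30*(m:ℤ)^2) * psum2 m
    + (-30*(m:ℤ)) * psum3 m + 2 * psum4 m

lemma Q15 (m : ℕ) : (420:ℤ) * ∑ d ∈ Finset.Ico 1 m,
      (2*(d:ℤ)^6 + 6*(d:ℤ)^5*(((m - d : ℕ)):ℤ) + 5*(d:ℤ)^4*(((m - d : ℕ)):ℤ)^2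
        + 5*(d:ℤ)^2*(((m - d : ℕ)):ℤ)^4 + 6*(d:ℤ)*(((m - d : ℕ)):ℤ)^5 + 2*(((m - d : ℕ)):ℤ)^6)
    = 400*(m:ℤ)^7 - 840*(m:ℤ)^6 + 420*(m:ℤ)^5 + 20*(m:ℤ) := by
  rcases Nat.eq_zero_or_pos m with h | h
  · subst h; simp
  have hc : ∀ d ∈ Finset.Ico 1 m, (2*(d:ℤ)^6 + 6*(d:ℤ)^5*(((m - d : ℕ)):ℤ)
        + 5*(d:ℤ)^4*(((m - d : ℕ)):ℤ)^2 + 5*(d:ℤ)^2*(((m - d : ℕ)):ℤ)^4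
        + 6*(d:ℤ)*(((m - d : ℕ)):ℤ)^5 + 2*(((m - d : ℕ)):ℤ)^6)
      = ((2*(m:ℤ)^6) + ((-6*(m:ℤ)^5) * (d:ℤ) + ((5*(m:ℤ)^4) * (d:ℤ)^2
          + ((5*(m:ℤ)^2) * (d:ℤ)^4 + ((-6*(m:ℤ)) * (d:ℤ)^5 + 2 * (d:ℤ)^6))))) := by
    intro d hd
    rw [Finset.mem_Ico] at hd
    rw [Nat.cast_sub hd.2.le]
    ring
  rw [Finset.sum_congr rfl hc, Finset.sum_add_distrib, Finset.sum_add_distrib,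
    Finset.sum_add_distrib, Finset.sum_add_distrib, Finset.sum_add_distrib,
    Finset.sum_const, ← Finset.mul_sum, ← Finset.mul_sum, ← Finset.mul_sum, ← Finset.mul_sum,
    ← Finset.mul_sum, Nat.card_Ico, nsmul_eq_mul]
  have hm1 : ((m - 1 : ℕ) : ℤ) = (m:ℤ) - 1 := by omega
  rw [hm1, Ico_eq_range1, Ico_eq_range_pow m 2 (by norm_num), Ico_eq_range_pow m 4 (by norm_num),
    Ico_eq_range_pow m 5 (by norm_num), Ico_eq_range_pow m 6 (by norm_num)]
  linear_combination (-1260*(m:ℤ)^5) * psum1 m + (350*(m:ℤ)^4) * psum2 m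
    + (70*(m:ℤ)^2) * psum4 m + (-210*(m:ℤ)) * psum5 m + 20 * psum6 m

lemma Q33 (m : ℕ) : (60:ℤ) * ∑ d ∈ Finset.Ico 1 m,
      ((d:ℤ)^2*(((m - d : ℕ)):ℤ)^2 * ((d:ℤ)^2 + 2*(d:ℤ)*(((m - d : ℕ)):ℤ) + (((m - d : ℕ)):ℤ)^2))
    = 2*(m:ℤ)^7 - 2*(m:ℤ)^3 := by
  rcases Nat.eq_zero_or_pos m with h | h
  · subst h; simp
  have hc : ∀ d ∈ Finset.Ico 1 m,
      ((d:ℤ)^2*(((m - d : ℕ)):ℤ)^2 * ((d:ℤ)^2 + 2*(d:ℤ)*(((m - d : ℕ)):ℤ) + (((m - d : ℕ)):ℤ)^2))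
      = (((m:ℤ)^4) * (d:ℤ)^2 + ((-2*(m:ℤ)^3) * (d:ℤ)^3 + ((m:ℤ)^2) * (d:ℤ)^4)) := by
    intro d hd
    rw [Finset.mem_Ico] at hd
    rw [Nat.cast_sub hd.2.le]
    ring
  rw [Finset.sum_congr rfl hc, Finset.sum_add_distrib, Finset.sum_add_distrib,
    ← Finset.mul_sum, ← Finset.mul_sum, ← Finset.mul_sum]
  rw [Ico_eq_range_pow m 2 (by norm_num), Ico_eq_range_pow m 3 (by norm_num),
    Ico_eq_range_pow m 4 (by norm_num)]
  linear_combination (10*(m:ℤ)^4) * psum2 m + (-30*(m:ℤ)^3) * psum3 m + (2*(m:ℤ)^2) * psum4 m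


/- ------------ the four convolution identities ------------- -/

theorem conv11 (n : ℕ) :
    12 * ∑ m ∈ Finset.Ico 1 n, sigZ 1 m * sigZ 1 (n - m)
      = 5 * sigZ 3 n + sigZ 1 n - 6 * (n:ℤ) * sigZ 1 n := by
  have key := master n (fun d e => (d:ℤ)^2 + (d:ℤ)*(e:ℤ) + (e:ℤ)^2)
      (fun d e => 2*((d:ℤ)*(e:ℤ)))
      (fun d e => by ring) (fun d e => by ring)
      (fun d e hde => by
        rw [Nat.cast_sub hde.le]
        ring)
  -- W(t) = 2 * Conv
  have wt : ∑ x ∈ P4 n, 2*((x.2.1:ℤ)*(x.2.2.2:ℤ))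
      = 2 * ∑ m ∈ Finset.Ico 1 n, sigZ 1 m * sigZ 1 (n - m) := by
    rw [← Finset.mul_sum]
    congr 1
    trans (∑ m ∈ Finset.Ico 1 n, (∑ u ∈ m.divisors, (u:ℤ)) * (∑ v ∈ (n - m).divisors, (v:ℤ)))
    · exact sum_P4_fact n (fun u => (u:ℤ)) (fun u => (u:ℤ))
    · refine Finset.sum_congr rfl fun m _ => ?_
      rw [sigZ_eq, sigZ_eq]
      simp [pow_one]
  -- diagonal terms
  have dg : ∑ d ∈ n.divisors, ∑ _a ∈ Finset.Ico 1 (n / d), ((d:ℤ)^2 + (d:ℤ)*(d:ℤ) + (d:ℤ)^2)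
      = 3*((n:ℤ) * sigZ 1 n) - 3*sigZ 2 n := by
    trans (∑ d ∈ n.divisors, (((n / d : ℕ) : ℤ) - 1) * ((d:ℤ)^2 + (d:ℤ)*(d:ℤ) + (d:ℤ)^2))
    · exact diag_inner n 0 _
    have hstep : ∀ d ∈ n.divisors, (((n / d : ℕ) : ℤ) - 1) * ((d:ℤ)^2 + (d:ℤ)*(d:ℤ) + (d:ℤ)^2)
        = 3 * ((((n / d : ℕ) : ℤ) - 1) * (d:ℤ)^2) := fun d _ => by ring
    rw [Finset.sum_congr rfl hstep, ← Finset.mul_sum, DD_pow n 1]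
    ring
  have dt : ∑ d ∈ n.divisors, ∑ _a ∈ Finset.Ico 1 (n / d), (2*((d:ℤ)*(d:ℤ)))
      = 2*((n:ℤ) * sigZ 1 n) - 2*sigZ 2 n := by
    trans (∑ d ∈ n.divisors, (((n / d : ℕ) : ℤ) - 1) * (2*((d:ℤ)*(d:ℤ))))
    · exact diag_inner n 0 _
    have hstep : ∀ d ∈ n.divisors, (((n / d : ℕ) : ℤ) - 1) * (2*((d:ℤ)*(d:ℤ)))
        = 2 * ((((n / d : ℕ) : ℤ) - 1) * (d:ℤ)^2) := fun d _ => by ring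
    rw [Finset.sum_congr rfl hstep, ← Finset.mul_sum, DD_pow n 1]
    ring
  -- DA term
  have da : (6:ℤ) * ∑ a ∈ n.divisors, ∑ d ∈ Finset.Ico 1 (n / a),
        ((d:ℤ)^2 + (d:ℤ)*(((n / a - d : ℕ)):ℤ) + (((n / a - d : ℕ)):ℤ)^2)
      = 5*sigZ 3 n - 6*sigZ 2 n + sigZ 1 n := by
    rw [Finset.mul_sum]
    rw [Finset.sum_congr rfl (fun a _ => Q11 (n / a))]
    trans (∑ d ∈ n.divisors, (5*(d:ℤ)^3 - 6*(d:ℤ)^2 + (d:ℤ)))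
    · exact Nat.sum_div_divisors n (fun d => 5*(d:ℤ)^3 - 6*(d:ℤ)^2 + (d:ℤ))
    trans (∑ d ∈ n.divisors, ((1:ℤ)*(d:ℤ) + (-6)*(d:ℤ)^2 + 5*(d:ℤ)^3 + 0*(d:ℤ)^4
        + 0*(d:ℤ)^5 + 0*(d:ℤ)^6 + 0*(d:ℤ)^7))
    · exact Finset.sum_congr rfl fun d _ => by ring
    rw [div_sum_poly]
    ring
  linarith [key, wt, dg, dt, da]

theorem conv13 (n : ℕ) :
    240 * ∑ m ∈ Finset.Ico 1 n, sigZ 1 m * sigZ 3 (n - m)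
      = 21 * sigZ 5 n + 10 * sigZ 3 n - sigZ 1 n - 30 * (n:ℤ) * sigZ 3 n := by
  have key := master n
      (fun d e => (d:ℤ)^4 + 2*(d:ℤ)^3*(e:ℤ) + 3*(d:ℤ)^2*(e:ℤ)^2 + 2*(d:ℤ)*(e:ℤ)^3 + (e:ℤ)^4)
      (fun d e => 4*((d:ℤ)^3*(e:ℤ)) + 4*((d:ℤ)*(e:ℤ)^3))
      (fun d e => by ring) (fun d e => by ring)
      (fun d e hde => by
        rw [Nat.cast_sub hde.le]
        ring)
  have swap : ∑ x ∈ P4 n, ((x.2.1:ℤ)^3*(x.2.2.2:ℤ))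
      = ∑ x ∈ P4 n, ((x.2.1:ℤ)*(x.2.2.2:ℤ)^3) := by
    have := sum_swap_P4_all n (fun _ d _ e => (d:ℤ)^3*(e:ℤ))
    rw [this]
    exact Finset.sum_congr rfl fun x _ => by ring
  have wt : ∑ x ∈ P4 n, (4*((x.2.1:ℤ)^3*(x.2.2.2:ℤ)) + 4*((x.2.1:ℤ)*(x.2.2.2:ℤ)^3))
      = 8 * ∑ m ∈ Finset.Ico 1 n, sigZ 1 m * sigZ 3 (n - m) := by
    rw [Finset.sum_add_distrib, ← Finset.mul_sum, ← Finset.mul_sum, swap]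
    have fact : ∑ x ∈ P4 n, ((x.2.1:ℤ)*(x.2.2.2:ℤ)^3)
        = ∑ m ∈ Finset.Ico 1 n, sigZ 1 m * sigZ 3 (n - m) := by
      trans (∑ m ∈ Finset.Ico 1 n, (∑ u ∈ m.divisors, (u:ℤ)) * (∑ v ∈ (n - m).divisors, (v:ℤ)^3))
      · exact sum_P4_fact n (fun u => (u:ℤ)) (fun u => (u:ℤ)^3)
      · refine Finset.sum_congr rfl fun m _ => ?_
        rw [sigZ_eq, sigZ_eq]
        simp [pow_one]
    rw [fact]
    ring
  have dg : ∑ d ∈ n.divisors, ∑ _a ∈ Finset.Ico 1 (n / d),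
        ((d:ℤ)^4 + 2*(d:ℤ)^3*(d:ℤ) + 3*(d:ℤ)^2*(d:ℤ)^2 + 2*(d:ℤ)*(d:ℤ)^3 + (d:ℤ)^4)
      = 9*((n:ℤ) * sigZ 3 n) - 9*sigZ 4 n := by
    trans (∑ d ∈ n.divisors, (((n / d : ℕ) : ℤ) - 1)
        * ((d:ℤ)^4 + 2*(d:ℤ)^3*(d:ℤ) + 3*(d:ℤ)^2*(d:ℤ)^2 + 2*(d:ℤ)*(d:ℤ)^3 + (d:ℤ)^4))
    · exact diag_inner n 0 _
    have hstep : ∀ d ∈ n.divisors, (((n / d : ℕ) : ℤ) - 1)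
        * ((d:ℤ)^4 + 2*(d:ℤ)^3*(d:ℤ) + 3*(d:ℤ)^2*(d:ℤ)^2 + 2*(d:ℤ)*(d:ℤ)^3 + (d:ℤ)^4)
        = 9 * ((((n / d : ℕ) : ℤ) - 1) * (d:ℤ)^4) := fun d _ => by ring
    rw [Finset.sum_congr rfl hstep, ← Finset.mul_sum, DD_pow n 3]
    ring
  have dt : ∑ d ∈ n.divisors, ∑ _a ∈ Finset.Ico 1 (n / d),
        (4*((d:ℤ)^3*(d:ℤ)) + 4*((d:ℤ)*(d:ℤ)^3))
      = 8*((n:ℤ) * sigZ 3 n) - 8*sigZ 4 n := by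
    trans (∑ d ∈ n.divisors, (((n / d : ℕ) : ℤ) - 1) * (4*((d:ℤ)^3*(d:ℤ)) + 4*((d:ℤ)*(d:ℤ)^3)))
    · exact diag_inner n 0 _
    have hstep : ∀ d ∈ n.divisors, (((n / d : ℕ) : ℤ) - 1) * (4*((d:ℤ)^3*(d:ℤ)) + 4*((d:ℤ)*(d:ℤ)^3))
        = 8 * ((((n / d : ℕ) : ℤ) - 1) * (d:ℤ)^4) := fun d _ => by ring
    rw [Finset.sum_congr rfl hstep, ← Finset.mul_sum, DD_pow n 3]
    ring
  have da : (60:ℤ) * ∑ a ∈ n.divisors, ∑ d ∈ Finset.Ico 1 (n / a),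
        ((d:ℤ)^4 + 2*(d:ℤ)^3*(((n / a - d : ℕ)):ℤ) + 3*(d:ℤ)^2*(((n / a - d : ℕ)):ℤ)^2
          + 2*(d:ℤ)*(((n / a - d : ℕ)):ℤ)^3 + (((n / a - d : ℕ)):ℤ)^4)
      = 42*sigZ 5 n - 60*sigZ 4 n + 20*sigZ 3 n - 2*sigZ 1 n := by
    rw [Finset.mul_sum]
    rw [Finset.sum_congr rfl (fun a _ => Q13 (n / a))]
    trans (∑ d ∈ n.divisors, (42*(d:ℤ)^5 - 60*(d:ℤ)^4 + 20*(d:ℤ)^3 - 2*(d:ℤ)))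
    · exact Nat.sum_div_divisors n (fun d => 42*(d:ℤ)^5 - 60*(d:ℤ)^4 + 20*(d:ℤ)^3 - 2*(d:ℤ))
    trans (∑ d ∈ n.divisors, ((-2:ℤ)*(d:ℤ) + 0*(d:ℤ)^2 + 20*(d:ℤ)^3 + (-60)*(d:ℤ)^4
        + 42*(d:ℤ)^5 + 0*(d:ℤ)^6 + 0*(d:ℤ)^7))
    · exact Finset.sum_congr rfl fun d _ => by ring
    rw [div_sum_poly]
    ring
  linarith [key, wt, dg, dt, da]

theorem conv15 (n : ℕ) :
    504 * ∑ m ∈ Finset.Ico 1 n, sigZ 1 m * sigZ 5 (n - m)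
      = 20 * sigZ 7 n + 21 * sigZ 5 n + sigZ 1 n - 42 * (n:ℤ) * sigZ 5 n := by
  have key := master n
      (fun d e => 2*(d:ℤ)^6 + 6*(d:ℤ)^5*(e:ℤ) + 5*(d:ℤ)^4*(e:ℤ)^2 + 5*(d:ℤ)^2*(e:ℤ)^4
        + 6*(d:ℤ)*(e:ℤ)^5 + 2*(e:ℤ)^6)
      (fun d e => 12*((d:ℤ)^5*(e:ℤ)) + 12*((d:ℤ)*(e:ℤ)^5))
      (fun d e => by ring) (fun d e => by ring)
      (fun d e hde => by
        rw [Nat.cast_sub hde.le]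
        ring)
  have swap : ∑ x ∈ P4 n, ((x.2.1:ℤ)^5*(x.2.2.2:ℤ))
      = ∑ x ∈ P4 n, ((x.2.1:ℤ)*(x.2.2.2:ℤ)^5) := by
    have := sum_swap_P4_all n (fun _ d _ e => (d:ℤ)^5*(e:ℤ))
    rw [this]
    exact Finset.sum_congr rfl fun x _ => by ring
  have wt : ∑ x ∈ P4 n, (12*((x.2.1:ℤ)^5*(x.2.2.2:ℤ)) + 12*((x.2.1:ℤ)*(x.2.2.2:ℤ)^5))
      = 24 * ∑ m ∈ Finset.Ico 1 n, sigZ 1 m * sigZ 5 (n - m) := by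
    rw [Finset.sum_add_distrib, ← Finset.mul_sum, ← Finset.mul_sum, swap]
    have fact : ∑ x ∈ P4 n, ((x.2.1:ℤ)*(x.2.2.2:ℤ)^5)
        = ∑ m ∈ Finset.Ico 1 n, sigZ 1 m * sigZ 5 (n - m) := by
      trans (∑ m ∈ Finset.Ico 1 n, (∑ u ∈ m.divisors, (u:ℤ)) * (∑ v ∈ (n - m).divisors, (v:ℤ)^5))
      · exact sum_P4_fact n (fun u => (u:ℤ)) (fun u => (u:ℤ)^5)
      · refine Finset.sum_congr rfl fun m _ => ?_
        rw [sigZ_eq, sigZ_eq]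
        simp [pow_one]
    rw [fact]
    ring
  have dg : ∑ d ∈ n.divisors, ∑ _a ∈ Finset.Ico 1 (n / d),
        (2*(d:ℤ)^6 + 6*(d:ℤ)^5*(d:ℤ) + 5*(d:ℤ)^4*(d:ℤ)^2 + 5*(d:ℤ)^2*(d:ℤ)^4
          + 6*(d:ℤ)*(d:ℤ)^5 + 2*(d:ℤ)^6)
      = 26*((n:ℤ) * sigZ 5 n) - 26*sigZ 6 n := by
    trans (∑ d ∈ n.divisors, (((n / d : ℕ) : ℤ) - 1)
        * (2*(d:ℤ)^6 + 6*(d:ℤ)^5*(d:ℤ) + 5*(d:ℤ)^4*(d:ℤ)^2 + 5*(d:ℤ)^2*(d:ℤ)^4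
          + 6*(d:ℤ)*(d:ℤ)^5 + 2*(d:ℤ)^6))
    · exact diag_inner n 0 _
    have hstep : ∀ d ∈ n.divisors, (((n / d : ℕ) : ℤ) - 1)
        * (2*(d:ℤ)^6 + 6*(d:ℤ)^5*(d:ℤ) + 5*(d:ℤ)^4*(d:ℤ)^2 + 5*(d:ℤ)^2*(d:ℤ)^4
          + 6*(d:ℤ)*(d:ℤ)^5 + 2*(d:ℤ)^6)
        = 26 * ((((n / d : ℕ) : ℤ) - 1) * (d:ℤ)^6) := fun d _ => by ring
    rw [Finset.sum_congr rfl hstep, ← Finset.mul_sum, DD_pow n 5]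
    ring
  have dt : ∑ d ∈ n.divisors, ∑ _a ∈ Finset.Ico 1 (n / d),
        (12*((d:ℤ)^5*(d:ℤ)) + 12*((d:ℤ)*(d:ℤ)^5))
      = 24*((n:ℤ) * sigZ 5 n) - 24*sigZ 6 n := by
    trans (∑ d ∈ n.divisors, (((n / d : ℕ) : ℤ) - 1) * (12*((d:ℤ)^5*(d:ℤ)) + 12*((d:ℤ)*(d:ℤ)^5)))
    · exact diag_inner n 0 _
    have hstep : ∀ d ∈ n.divisors, (((n / d : ℕ) : ℤ) - 1)
          * (12*((d:ℤ)^5*(d:ℤ)) + 12*((d:ℤ)*(d:ℤ)^5))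
        = 24 * ((((n / d : ℕ) : ℤ) - 1) * (d:ℤ)^6) := fun d _ => by ring
    rw [Finset.sum_congr rfl hstep, ← Finset.mul_sum, DD_pow n 5]
    ring
  have da : (420:ℤ) * ∑ a ∈ n.divisors, ∑ d ∈ Finset.Ico 1 (n / a),
        (2*(d:ℤ)^6 + 6*(d:ℤ)^5*(((n / a - d : ℕ)):ℤ) + 5*(d:ℤ)^4*(((n / a - d : ℕ)):ℤ)^2
          + 5*(d:ℤ)^2*(((n / a - d : ℕ)):ℤ)^4 + 6*(d:ℤ)*(((n / a - d : ℕ)):ℤ)^5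
          + 2*(((n / a - d : ℕ)):ℤ)^6)
      = 400*sigZ 7 n - 840*sigZ 6 n + 420*sigZ 5 n + 20*sigZ 1 n := by
    rw [Finset.mul_sum]
    rw [Finset.sum_congr rfl (fun a _ => Q15 (n / a))]
    trans (∑ d ∈ n.divisors, (400*(d:ℤ)^7 - 840*(d:ℤ)^6 + 420*(d:ℤ)^5 + 20*(d:ℤ)))
    · exact Nat.sum_div_divisors n (fun d => 400*(d:ℤ)^7 - 840*(d:ℤ)^6 + 420*(d:ℤ)^5 + 20*(d:ℤ))
    trans (∑ d ∈ n.divisors, ((20:ℤ)*(d:ℤ) + 0*(d:ℤ)^2 + 0*(d:ℤ)^3 + 0*(d:ℤ)^4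
        + 420*(d:ℤ)^5 + (-840)*(d:ℤ)^6 + 400*(d:ℤ)^7))
    · exact Finset.sum_congr rfl fun d _ => by ring
    rw [div_sum_poly]
    ring
  linarith [key, wt, dg, dt, da]

theorem conv33 (n : ℕ) :
    120 * ∑ m ∈ Finset.Ico 1 n, sigZ 3 m * sigZ 3 (n - m)
      = sigZ 7 n - sigZ 3 n := by
  have key := master n
      (fun d e => (d:ℤ)^2*(e:ℤ)^2 * ((d:ℤ)^2 + 2*(d:ℤ)*(e:ℤ) + (e:ℤ)^2))
      (fun d e => 4*((d:ℤ)^3*(e:ℤ)^3))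
      (fun d e => by ring) (fun d e => by ring)
      (fun d e hde => by
        rw [Nat.cast_sub hde.le]
        ring)
  have wt : ∑ x ∈ P4 n, (4*((x.2.1:ℤ)^3*(x.2.2.2:ℤ)^3))
      = 4 * ∑ m ∈ Finset.Ico 1 n, sigZ 3 m * sigZ 3 (n - m) := by
    rw [← Finset.mul_sum]
    congr 1
    trans (∑ m ∈ Finset.Ico 1 n, (∑ u ∈ m.divisors, (u:ℤ)^3) * (∑ v ∈ (n - m).divisors, (v:ℤ)^3))
    · exact sum_P4_fact n (fun u => (u:ℤ)^3) (fun u => (u:ℤ)^3)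
    · refine Finset.sum_congr rfl fun m _ => ?_
      rw [sigZ_eq, sigZ_eq]
  have dg : ∑ d ∈ n.divisors, ∑ _a ∈ Finset.Ico 1 (n / d),
        ((d:ℤ)^2*(d:ℤ)^2 * ((d:ℤ)^2 + 2*(d:ℤ)*(d:ℤ) + (d:ℤ)^2))
      = 4*((n:ℤ) * sigZ 5 n) - 4*sigZ 6 n := by
    trans (∑ d ∈ n.divisors, (((n / d : ℕ) : ℤ) - 1)
        * ((d:ℤ)^2*(d:ℤ)^2 * ((d:ℤ)^2 + 2*(d:ℤ)*(d:ℤ) + (d:ℤ)^2)))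
    · exact diag_inner n 0 _
    have hstep : ∀ d ∈ n.divisors, (((n / d : ℕ) : ℤ) - 1)
        * ((d:ℤ)^2*(d:ℤ)^2 * ((d:ℤ)^2 + 2*(d:ℤ)*(d:ℤ) + (d:ℤ)^2))
        = 4 * ((((n / d : ℕ) : ℤ) - 1) * (d:ℤ)^6) := fun d _ => by ring
    rw [Finset.sum_congr rfl hstep, ← Finset.mul_sum, DD_pow n 5]
    ring
  have dt : ∑ d ∈ n.divisors, ∑ _a ∈ Finset.Ico 1 (n / d), (4*((d:ℤ)^3*(d:ℤ)^3))
      = 4*((n:ℤ) * sigZ 5 n) - 4*sigZ 6 n := by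
    trans (∑ d ∈ n.divisors, (((n / d : ℕ) : ℤ) - 1) * (4*((d:ℤ)^3*(d:ℤ)^3)))
    · exact diag_inner n 0 _
    have hstep : ∀ d ∈ n.divisors, (((n / d : ℕ) : ℤ) - 1) * (4*((d:ℤ)^3*(d:ℤ)^3))
        = 4 * ((((n / d : ℕ) : ℤ) - 1) * (d:ℤ)^6) := fun d _ => by ring
    rw [Finset.sum_congr rfl hstep, ← Finset.mul_sum, DD_pow n 5]
    ring
  have da : (60:ℤ) * ∑ a ∈ n.divisors, ∑ d ∈ Finset.Ico 1 (n / a),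
        ((d:ℤ)^2*(((n / a - d : ℕ)):ℤ)^2 * ((d:ℤ)^2 + 2*(d:ℤ)*(((n / a - d : ℕ)):ℤ)
          + (((n / a - d : ℕ)):ℤ)^2))
      = 2*sigZ 7 n - 2*sigZ 3 n := by
    rw [Finset.mul_sum]
    rw [Finset.sum_congr rfl (fun a _ => Q33 (n / a))]
    trans (∑ d ∈ n.divisors, (2*(d:ℤ)^7 - 2*(d:ℤ)^3))
    · exact Nat.sum_div_divisors n (fun d => 2*(d:ℤ)^7 - 2*(d:ℤ)^3)
    trans (∑ d ∈ n.divisors, ((0:ℤ)*(d:ℤ) + 0*(d:ℤ)^2 + (-2)*(d:ℤ)^3 + 0*(d:ℤ)^4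
        + 0*(d:ℤ)^5 + 0*(d:ℤ)^6 + 2*(d:ℤ)^7))
    · exact Finset.sum_congr rfl fun d _ => by ring
    rw [div_sum_poly]
    ring
  linarith [key, wt, dg, dt, da]

end RamanujanAux2

open Complex Finset
namespace RamanujanAn

/-- σ_k as a complex number -/
noncomputable def sig (k n : ℕ) : ℂ := ((ArithmeticFunction.sigma k n : ℕ) : ℂ)

-- ℂ-level convolution identities (to be supplied by the arithmetic part)
lemma conv11C (N : ℕ) : 12 * ∑ k ∈ Finset.Ico 1 N, sig 1 k * sig 1 (N - k)
    = 5 * sig 3 N + sig 1 N - 6 * (N:ℂ) * sig 1 N := by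
  have h := RamanujanAux2.conv11 N
  unfold RamanujanAux2.sigZ at h
  unfold sig
  exact_mod_cast h

lemma conv13C (N : ℕ) : 240 * ∑ k ∈ Finset.Ico 1 N, sig 1 k * sig 3 (N - k)
    = 21 * sig 5 N + 10 * sig 3 N - sig 1 N - 30 * (N:ℂ) * sig 3 N := by
  have h := RamanujanAux2.conv13 N
  unfold RamanujanAux2.sigZ at h
  unfold sig
  exact_mod_cast h

lemma conv15C (N : ℕ) : 504 * ∑ k ∈ Finset.Ico 1 N, sig 1 k * sig 5 (N - k)
    = 20 * sig 7 N + 21 * sig 5 N + sig 1 N - 42 * (N:ℂ) * sig 5 N := by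
  have h := RamanujanAux2.conv15 N
  unfold RamanujanAux2.sigZ at h
  unfold sig
  exact_mod_cast h

lemma conv33C (N : ℕ) : 120 * ∑ k ∈ Finset.Ico 1 N, sig 3 k * sig 3 (N - k)
    = sig 7 N - sig 3 N := by
  have h := RamanujanAux2.conv33 N
  unfold RamanujanAux2.sigZ at h
  unfold sig
  exact_mod_cast h

/-- crude bound σ_k(m) ≤ m^(k+1) -/
lemma sigma_le (k m : ℕ) : (ArithmeticFunction.sigma k m : ℕ) ≤ m ^ (k + 1) := by
  rw [ArithmeticFunction.sigma_apply]
  calc ∑ d ∈ m.divisors, d ^ k ≤ ∑ _d ∈ m.divisors, m ^ k := by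
        refine Finset.sum_le_sum fun d hd => Nat.pow_le_pow_left (Nat.divisor_le hd) k
    _ = m.divisors.card * m ^ k := by rw [Finset.sum_const, smul_eq_mul]
    _ ≤ m * m ^ k := by
        refine Nat.mul_le_mul_right _ ?_
        have : m.divisors.card ≤ (Finset.Ico 1 (m + 1)).card :=
          Finset.card_filter_le _ _
        simpa using this
    _ = m ^ (k + 1) := by ring

lemma norm_sig_le (k n : ℕ) : ‖sig k (n + 1)‖ ≤ ((n + 1 : ℕ) : ℝ) ^ (k + 1) := by
  rw [sig, Complex.norm_natCast]
  exact_mod_cast sigma_le k (n + 1)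

/-- summability of (n+1)^K r^(n+1) -/
lemma summable_shift (K : ℕ) {r : ℝ} (h0 : 0 ≤ r) (hr : r < 1) :
    Summable (fun n : ℕ => ((n + 1 : ℕ) : ℝ) ^ K * r ^ (n + 1)) := by
  have h : Summable (fun n : ℕ => (n : ℝ) ^ K * r ^ n) :=
    summable_pow_mul_geometric_of_norm_lt_one K
      (by rwa [Real.norm_eq_abs, _root_.abs_of_nonneg h0])
  exact (summable_nat_add_iff 1).mpr h

lemma summable_norm_coef {c : ℕ → ℂ} {K : ℕ} (hc : ∀ n, ‖c n‖ ≤ ((n + 1 : ℕ) : ℝ) ^ K)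
    {q : ℂ} (hq : ‖q‖ < 1) :
    Summable (fun n => ‖c n * q ^ (n + 1)‖) := by
  have habs : (0:ℝ) ≤ ‖q‖ := norm_nonneg q
  refine Summable.of_nonneg_of_le (fun n => norm_nonneg _) (fun n => ?_)
    (summable_shift K habs hq)
  rw [norm_mul, norm_pow]
  exact mul_le_mul_of_nonneg_right (hc n) (pow_nonneg habs _)

lemma summable_coef {c : ℕ → ℂ} {K : ℕ} (hc : ∀ n, ‖c n‖ ≤ ((n + 1 : ℕ) : ℝ) ^ K)
    {q : ℂ} (hq : ‖q‖ < 1) :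
    Summable (fun n => c n * q ^ (n + 1)) :=
  (summable_norm_coef hc hq).of_norm


/-- term-by-term differentiation of a q-power series on the unit disc -/
lemma hasDerivAt_series {c : ℕ → ℂ} {K : ℕ} (hc : ∀ n, ‖c n‖ ≤ ((n + 1 : ℕ) : ℝ) ^ K)
    {q : ℂ} (hq : ‖q‖ < 1) :
    HasDerivAt (fun z : ℂ => ∑' n : ℕ, c n * z ^ (n + 1))
      (∑' n : ℕ, ((n + 1 : ℕ) : ℂ) * c n * q ^ n) q := by
  set r : ℝ := (‖q‖ + 1) / 2 with hr
  have habs : (0:ℝ) ≤ ‖q‖ := norm_nonneg q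
  have hr0 : 0 < r := by rw [hr]; linarith
  have hrq : ‖q‖ < r := by rw [hr]; linarith
  have hr1 : r < 1 := by rw [hr]; linarith
  have hu : Summable (fun n : ℕ => ((n + 1 : ℕ) : ℝ) ^ (K + 1) * r ^ n) := by
    have h := summable_shift (K + 1) (le_of_lt hr0) hr1
    have := h.mul_right r⁻¹
    refine this.congr fun n => ?_
    rw [pow_succ]
    field_simp
    ring
  refine hasDerivAt_tsum_of_isPreconnected hu (Metric.isOpen_ball)
    (convex_ball (0:ℂ) r).isPreconnected
    (g' := fun n y => ((n + 1 : ℕ) : ℂ) * c n * y ^ n) (y₀ := 0)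
    ?_ ?_ ?_ ?_ ?_
  · intro n y _
    have h := (hasDerivAt_pow (n + 1) y).const_mul (c n)
    have e : c n * (((n + 1 : ℕ) : ℂ) * y ^ (n + 1 - 1)) = ((n + 1 : ℕ) : ℂ) * c n * y ^ n := by
      simp only [Nat.add_sub_cancel]
      ring
    rw [e] at h
    exact h
  · intro n y hy
    rw [Metric.mem_ball, dist_zero_right] at hy
    rw [norm_mul, norm_mul, norm_pow, Complex.norm_natCast]
    calc ((n+1:ℕ):ℝ) * ‖c n‖ * ‖y‖ ^ n
        ≤ ((n+1:ℕ):ℝ) * ((n+1:ℕ):ℝ)^K * r ^ n := by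
          refine mul_le_mul ?_ ?_ (pow_nonneg (norm_nonneg _) _) (by positivity)
          · exact mul_le_mul_of_nonneg_left (hc n) (by positivity)
          · exact pow_le_pow_left₀ (norm_nonneg _) (le_of_lt hy) n
      _ = ((n+1:ℕ):ℝ)^(K+1) * r ^ n := by ring
  · exact Metric.mem_ball_self hr0
  · refine summable_zero.congr fun n => ?_
    simp
  · rw [Metric.mem_ball, dist_zero_right]
    exact hrq


noncomputable def S (k : ℕ) (q : ℂ) : ℂ := ∑' n : ℕ, sig k (n + 1) * q ^ (n + 1)
noncomputable def D (k : ℕ) (q : ℂ) : ℂ := ∑' n : ℕ, ((n + 1 : ℕ) : ℂ) * sig k (n + 1) * q ^ n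

lemma hasDerivAt_S (k : ℕ) {q : ℂ} (hq : ‖q‖ < 1) :
    HasDerivAt (S k) (D k q) q :=
  hasDerivAt_series (norm_sig_le k) hq

lemma hasDerivAt_E2c {q : ℂ} (hq : ‖q‖ < 1) :
    HasDerivAt E2c (-(24 * D 1 q)) q := by
  have h := ((hasDerivAt_S 1 hq).const_mul (24:ℂ)).const_sub 1
  exact h

lemma hasDerivAt_E4c {q : ℂ} (hq : ‖q‖ < 1) :
    HasDerivAt E4c (240 * D 3 q) q := by
  have h := ((hasDerivAt_S 3 hq).const_mul (240:ℂ)).const_add 1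
  exact h

lemma hasDerivAt_E6c {q : ℂ} (hq : ‖q‖ < 1) :
    HasDerivAt E6c (-(504 * D 5 q)) q := by
  have h := ((hasDerivAt_S 5 hq).const_mul (504:ℂ)).const_sub 1
  exact h

/-- shifted Cauchy-product coefficients -/
noncomputable def Tif (a b : ℕ) (n : ℕ) : ℂ :=
  if n = 0 then 0 else ∑ p ∈ Finset.HasAntidiagonal.antidiagonal (n - 1), sig a (p.1 + 1) * sig b (p.2 + 1)

lemma Tif_bound (a b n : ℕ) : ‖Tif a b n‖ ≤ ((n + 1 : ℕ) : ℝ) ^ (a + b + 3) := by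
  cases n with
  | zero => rw [Tif, if_pos rfl, norm_zero]; positivity
  | succ m =>
    have hne : m + 1 ≠ 0 := Nat.succ_ne_zero m
    simp only [Tif, if_neg hne, Nat.add_sub_cancel]
    calc ‖∑ p ∈ Finset.HasAntidiagonal.antidiagonal m, sig a (p.1 + 1) * sig b (p.2 + 1)‖
        ≤ ∑ p ∈ Finset.HasAntidiagonal.antidiagonal m, ‖sig a (p.1 + 1) * sig b (p.2 + 1)‖ :=
          norm_sum_le _ _
      _ ≤ ∑ _p ∈ Finset.HasAntidiagonal.antidiagonal m, ((m + 1 : ℕ) : ℝ) ^ (a + 1) * ((m + 1 : ℕ) : ℝ) ^ (b + 1) := by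
          refine Finset.sum_le_sum fun p hp => ?_
          rw [Finset.HasAntidiagonal.mem_antidiagonal] at hp
          rw [norm_mul]
          have h1 : ‖sig a (p.1 + 1)‖ ≤ ((m + 1 : ℕ) : ℝ) ^ (a + 1) :=
            (norm_sig_le a p.1).trans (by
              have : (p.1 + 1 : ℕ) ≤ m + 1 := by omega
              exact pow_le_pow_left₀ (by positivity) (by exact_mod_cast this) _)
          have h2 : ‖sig b (p.2 + 1)‖ ≤ ((m + 1 : ℕ) : ℝ) ^ (b + 1) :=
            (norm_sig_le b p.2).trans (by
              have : (p.2 + 1 : ℕ) ≤ m + 1 := by omega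
              exact pow_le_pow_left₀ (by positivity) (by exact_mod_cast this) _)
          exact mul_le_mul h1 h2 (norm_nonneg _) (by positivity)
      _ = ((m + 1 : ℕ) : ℝ) * (((m + 1 : ℕ) : ℝ) ^ (a + 1) * ((m + 1 : ℕ) : ℝ) ^ (b + 1)) := by
          rw [Finset.sum_const, Finset.Nat.card_antidiagonal, nsmul_eq_mul]
      _ ≤ ((m + 2 : ℕ) : ℝ) * (((m + 2 : ℕ) : ℝ) ^ (a + 1) * ((m + 2 : ℕ) : ℝ) ^ (b + 1)) := by
          have hmm : ((m + 1 : ℕ) : ℝ) ≤ ((m + 2 : ℕ) : ℝ) := by exact_mod_cast Nat.le_succ _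
          have h0 : (0:ℝ) ≤ ((m + 1 : ℕ) : ℝ) := by positivity
          gcongr
      _ = ((m + 1 + 1 : ℕ) : ℝ) ^ (a + b + 3) := by
          push_cast
          ring
  
lemma cauchy (a b : ℕ) {q : ℂ} (hq : ‖q‖ < 1) :
    S a q * S b q
      = ∑' n : ℕ, (∑ p ∈ Finset.HasAntidiagonal.antidiagonal n, sig a (p.1 + 1) * sig b (p.2 + 1)) * q ^ (n + 2) := by
  unfold S
  rw [tsum_mul_tsum_eq_tsum_sum_antidiagonal_of_summable_norm
    (summable_norm_coef (norm_sig_le a) hq) (summable_norm_coef (norm_sig_le b) hq)]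
  refine tsum_congr fun n => ?_
  rw [Finset.sum_mul]
  refine Finset.sum_congr rfl fun p hp => ?_
  rw [Finset.HasAntidiagonal.mem_antidiagonal] at hp
  have hsum : p.1 + 1 + (p.2 + 1) = n + 2 := by omega
  rw [mul_mul_mul_comm, ← pow_add, hsum]

lemma S_mul_S (a b : ℕ) {q : ℂ} (hq : ‖q‖ < 1) :
    S a q * S b q = ∑' n : ℕ, Tif a b n * q ^ (n + 1) := by
  rw [cauchy a b hq]
  have hs : Summable (fun n => Tif a b n * q ^ (n + 1)) := summable_coef (Tif_bound a b) hq
  rw [Summable.tsum_eq_zero_add hs]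
  have h0 : Tif a b 0 * q ^ (0 + 1) = 0 := by rw [Tif, if_pos rfl, zero_mul]
  rw [h0, zero_add]
  refine (tsum_congr fun n => ?_).symm
  rw [Tif, if_neg (Nat.succ_ne_zero n), Nat.add_sub_cancel]

lemma tsum_fac (c : ℂ) (f : ℕ → ℂ) (q : ℂ) :
    c * ∑' n : ℕ, f n * q ^ (n + 1) = ∑' n : ℕ, (c * f n) * q ^ (n + 1) := by
  rw [← tsum_mul_left]
  exact tsum_congr fun n => by ring

lemma smul_summable (a : ℂ) {A : ℕ → ℂ} {q : ℂ} (h : Summable fun n => A n * q ^ (n + 1)) :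
    Summable (fun n => (a * A n) * q ^ (n + 1)) := by
  have := h.mul_left a
  refine this.congr fun n => by ring

lemma qD (k : ℕ) (q : ℂ) :
    q * D k q = ∑' n : ℕ, ((n + 1 : ℕ) : ℂ) * sig k (n + 1) * q ^ (n + 1) := by
  rw [D, ← tsum_mul_left]
  exact tsum_congr fun n => by ring

lemma antidiag_to_Ico (a b m : ℕ) :
    ∑ p ∈ Finset.HasAntidiagonal.antidiagonal m, sig a (p.1 + 1) * sig b (p.2 + 1)
      = ∑ k ∈ Finset.Ico 1 (m + 2), sig a k * sig b (m + 2 - k) := by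
  rw [Finset.Nat.sum_antidiagonal_eq_sum_range_succ_mk, Finset.sum_Ico_eq_sum_range]
  refine Finset.sum_congr (by norm_num) fun i hi => ?_
  rw [Finset.mem_range] at hi
  have h2 : m + 2 - (1 + i) = m - i + 1 := by omega
  have h1 : 1 + i = i + 1 := by omega
  rw [h2, h1]

lemma sig_one (k : ℕ) : sig k 1 = 1 := by
  simp [sig, ArithmeticFunction.sigma_apply]

lemma Tif_succ (a b m : ℕ) :
    Tif a b (m + 1) = ∑ k ∈ Finset.Ico 1 (m + 2), sig a k * sig b (m + 2 - k) := by
  rw [Tif, if_neg (Nat.succ_ne_zero m), Nat.add_sub_cancel]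
  exact antidiag_to_Ico a b m


/- ---------------- coefficient identities ------------------- -/

lemma coef1 (n : ℕ) :
    -288 * (((n + 1 : ℕ) : ℂ) * sig 1 (n + 1))
      = 576 * Tif 1 1 n - 48 * sig 1 (n + 1) - 240 * sig 3 (n + 1) := by
  cases n with
  | zero =>
    rw [Tif, if_pos rfl]
    simp [sig_one]
    norm_num
  | succ m =>
    rw [Tif_succ]
    have hb := conv11C (m + 2)
    have e : ∀ k : ℕ, sig k (m + 1 + 1) = sig k (m + 2) := fun _ => rfl
    simp only [e]
    push_cast at hb ⊢
    linear_combination (-48 : ℂ) * hb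

lemma coef2 (n : ℕ) :
    720 * (((n + 1 : ℕ) : ℂ) * sig 3 (n + 1))
      = 240 * sig 3 (n + 1) - 24 * sig 1 (n + 1) - 5760 * Tif 1 3 n + 504 * sig 5 (n + 1) := by
  cases n with
  | zero =>
    rw [Tif, if_pos rfl]
    simp [sig_one]
    norm_num
  | succ m =>
    rw [Tif_succ]
    have hb := conv13C (m + 2)
    have e : ∀ k : ℕ, sig k (m + 1 + 1) = sig k (m + 2) := fun _ => rfl
    simp only [e]
    push_cast at hb ⊢
    linear_combination (24 : ℂ) * hb

lemma coef3 (n : ℕ) :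
    -1008 * (((n + 1 : ℕ) : ℂ) * sig 5 (n + 1))
      = -504 * sig 5 (n + 1) - 24 * sig 1 (n + 1) + 12096 * Tif 1 5 n
        - 480 * sig 3 (n + 1) - 57600 * Tif 3 3 n := by
  cases n with
  | zero =>
    rw [Tif, if_pos rfl, Tif, if_pos rfl]
    simp [sig_one]
    norm_num
  | succ m =>
    rw [Tif_succ, Tif_succ]
    have hb := conv15C (m + 2)
    have hc := conv33C (m + 2)
    have e : ∀ k : ℕ, sig k (m + 1 + 1) = sig k (m + 2) := fun _ => rfl
    simp only [e]
    push_cast at hb hc ⊢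
    linear_combination (-24 : ℂ) * hb + 480 * hc

/- ---------------- the three differential equations ------------------- -/

lemma eq1 {q : ℂ} (hq : ‖q‖ < 1) :
    q * deriv E2c q = (E2c q ^ 2 - E4c q) / 12 := by
  rw [(hasDerivAt_E2c hq).deriv, eq_div_iff (by norm_num : (12:ℂ) ≠ 0)]
  have hS1 : Summable (fun n => sig 1 (n + 1) * q ^ (n + 1)) :=
    summable_coef (norm_sig_le 1) hq
  have hS3 : Summable (fun n => sig 3 (n + 1) * q ^ (n + 1)) :=
    summable_coef (norm_sig_le 3) hq
  have hT : Summable (fun n => Tif 1 1 n * q ^ (n + 1)) :=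
    summable_coef (Tif_bound 1 1) hq
  have hE2 : E2c q = 1 - 24 * S 1 q := rfl
  have hE4 : E4c q = 1 + 240 * S 3 q := rfl
  rw [hE2, hE4]
  have expand : (1 - 24 * S 1 q) ^ 2 - (1 + 240 * S 3 q)
      = 576 * (S 1 q * S 1 q) - 48 * S 1 q - 240 * S 3 q := by ring
  rw [expand, S_mul_S 1 1 hq]
  have hRHS : 576 * (∑' n : ℕ, Tif 1 1 n * q ^ (n + 1)) - 48 * S 1 q - 240 * S 3 q
      = ∑' n : ℕ, (576 * Tif 1 1 n - 48 * sig 1 (n + 1) - 240 * sig 3 (n + 1)) * q ^ (n + 1) := by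
    rw [S, S, tsum_fac 576 _ q, tsum_fac 48 _ q, tsum_fac 240 _ q,
      ← Summable.tsum_sub (smul_summable 576 hT) (smul_summable 48 hS1),
      ← Summable.tsum_sub ((smul_summable 576 hT).sub (smul_summable 48 hS1))
        (smul_summable 240 hS3)]
    exact tsum_congr fun n => by ring
  rw [hRHS]
  have hL : q * -(24 * D 1 q) * 12 = ∑' n : ℕ,
      (-288 * (((n + 1 : ℕ) : ℂ) * sig 1 (n + 1))) * q ^ (n + 1) := by
    have h1 : q * -(24 * D 1 q) * 12 = -288 * (q * D 1 q) := by ring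
    rw [h1, qD 1 q, ← tsum_mul_left]
    exact tsum_congr fun n => by ring
  rw [hL]
  exact tsum_congr fun n => by rw [coef1 n]

lemma eq2 {q : ℂ} (hq : ‖q‖ < 1) :
    q * deriv E4c q = (E2c q * E4c q - E6c q) / 3 := by
  rw [(hasDerivAt_E4c hq).deriv, eq_div_iff (by norm_num : (3:ℂ) ≠ 0)]
  have hS1 : Summable (fun n => sig 1 (n + 1) * q ^ (n + 1)) :=
    summable_coef (norm_sig_le 1) hq
  have hS3 : Summable (fun n => sig 3 (n + 1) * q ^ (n + 1)) :=
    summable_coef (norm_sig_le 3) hq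
  have hS5 : Summable (fun n => sig 5 (n + 1) * q ^ (n + 1)) :=
    summable_coef (norm_sig_le 5) hq
  have hT : Summable (fun n => Tif 1 3 n * q ^ (n + 1)) :=
    summable_coef (Tif_bound 1 3) hq
  have hE2 : E2c q = 1 - 24 * S 1 q := rfl
  have hE4 : E4c q = 1 + 240 * S 3 q := rfl
  have hE6 : E6c q = 1 - 504 * S 5 q := rfl
  rw [hE2, hE4, hE6]
  have expand : (1 - 24 * S 1 q) * (1 + 240 * S 3 q) - (1 - 504 * S 5 q)
      = 240 * S 3 q - 24 * S 1 q - 5760 * (S 1 q * S 3 q) + 504 * S 5 q := by ring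
  rw [expand, S_mul_S 1 3 hq]
  have hRHS : 240 * S 3 q - 24 * S 1 q - 5760 * (∑' n : ℕ, Tif 1 3 n * q ^ (n + 1))
        + 504 * S 5 q
      = ∑' n : ℕ, (240 * sig 3 (n + 1) - 24 * sig 1 (n + 1) - 5760 * Tif 1 3 n
          + 504 * sig 5 (n + 1)) * q ^ (n + 1) := by
    rw [S, S, S, tsum_fac 240 _ q, tsum_fac 24 _ q, tsum_fac 5760 _ q, tsum_fac 504 _ q,
      ← Summable.tsum_sub (smul_summable 240 hS3) (smul_summable 24 hS1),
      ← Summable.tsum_sub ((smul_summable 240 hS3).sub (smul_summable 24 hS1))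
        (smul_summable 5760 hT),
      ← Summable.tsum_add (((smul_summable 240 hS3).sub (smul_summable 24 hS1)).sub
        (smul_summable 5760 hT)) (smul_summable 504 hS5)]
    exact tsum_congr fun n => by ring
  rw [hRHS]
  have hL : q * (240 * D 3 q) * 3 = ∑' n : ℕ,
      (720 * (((n + 1 : ℕ) : ℂ) * sig 3 (n + 1))) * q ^ (n + 1) := by
    have h1 : q * (240 * D 3 q) * 3 = 720 * (q * D 3 q) := by ring
    rw [h1, qD 3 q, ← tsum_mul_left]
    exact tsum_congr fun n => by ring
  rw [hL]
  exact tsum_congr fun n => by rw [coef2 n]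

lemma eq3 {q : ℂ} (hq : ‖q‖ < 1) :
    q * deriv E6c q = (E2c q * E6c q - E4c q ^ 2) / 2 := by
  rw [(hasDerivAt_E6c hq).deriv, eq_div_iff (by norm_num : (2:ℂ) ≠ 0)]
  have hS1 : Summable (fun n => sig 1 (n + 1) * q ^ (n + 1)) :=
    summable_coef (norm_sig_le 1) hq
  have hS3 : Summable (fun n => sig 3 (n + 1) * q ^ (n + 1)) :=
    summable_coef (norm_sig_le 3) hq
  have hS5 : Summable (fun n => sig 5 (n + 1) * q ^ (n + 1)) :=
    summable_coef (norm_sig_le 5) hq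
  have hT15 : Summable (fun n => Tif 1 5 n * q ^ (n + 1)) :=
    summable_coef (Tif_bound 1 5) hq
  have hT33 : Summable (fun n => Tif 3 3 n * q ^ (n + 1)) :=
    summable_coef (Tif_bound 3 3) hq
  have hE2 : E2c q = 1 - 24 * S 1 q := rfl
  have hE4 : E4c q = 1 + 240 * S 3 q := rfl
  have hE6 : E6c q = 1 - 504 * S 5 q := rfl
  rw [hE2, hE4, hE6]
  have expand : (1 - 24 * S 1 q) * (1 - 504 * S 5 q) - (1 + 240 * S 3 q) ^ 2
      = -504 * S 5 q - 24 * S 1 q + 12096 * (S 1 q * S 5 q)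
        - 480 * S 3 q - 57600 * (S 3 q * S 3 q) := by ring
  rw [expand, S_mul_S 1 5 hq, S_mul_S 3 3 hq]
  have hRHS : -504 * S 5 q - 24 * S 1 q + 12096 * (∑' n : ℕ, Tif 1 5 n * q ^ (n + 1))
        - 480 * S 3 q - 57600 * (∑' n : ℕ, Tif 3 3 n * q ^ (n + 1))
      = ∑' n : ℕ, (-504 * sig 5 (n + 1) - 24 * sig 1 (n + 1) + 12096 * Tif 1 5 n
          - 480 * sig 3 (n + 1) - 57600 * Tif 3 3 n) * q ^ (n + 1) := by
    have e5 : -504 * S 5 q = (-504 : ℂ) * ∑' n : ℕ, sig 5 (n + 1) * q ^ (n + 1) := by rw [S]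
    have e1 : 24 * S 1 q = (24 : ℂ) * ∑' n : ℕ, sig 1 (n + 1) * q ^ (n + 1) := by rw [S]
    have e3 : 480 * S 3 q = (480 : ℂ) * ∑' n : ℕ, sig 3 (n + 1) * q ^ (n + 1) := by rw [S]
    rw [e5, e1, e3, tsum_fac (-504) _ q, tsum_fac 24 _ q, tsum_fac 12096 _ q,
      tsum_fac 480 _ q, tsum_fac 57600 _ q]
    have hA := smul_summable (-504 : ℂ) hS5
    have hB := smul_summable (24 : ℂ) hS1
    have hC := smul_summable (12096 : ℂ) hT15
    have hD := smul_summable (480 : ℂ) hS3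
    have hE := smul_summable (57600 : ℂ) hT33
    rw [← Summable.tsum_sub hA hB, ← Summable.tsum_add (hA.sub hB) hC,
      ← Summable.tsum_sub ((hA.sub hB).add hC) hD,
      ← Summable.tsum_sub (((hA.sub hB).add hC).sub hD) hE]
    exact tsum_congr fun n => by ring
  rw [hRHS]
  have hL : q * -(504 * D 5 q) * 2 = ∑' n : ℕ,
      (-1008 * (((n + 1 : ℕ) : ℂ) * sig 5 (n + 1))) * q ^ (n + 1) := by
    have h1 : q * -(504 * D 5 q) * 2 = -1008 * (q * D 5 q) := by ring
    rw [h1, qD 5 q, ← tsum_mul_left]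
    exact tsum_congr fun n => by ring
  rw [hL]
  exact tsum_congr fun n => by rw [coef3 n]

end RamanujanAn

theorem stmt9 :
    ∀ q : ℂ, ‖q‖ < 1 →
      (DifferentiableAt ℂ E2c q ∧ DifferentiableAt ℂ E4c q ∧ DifferentiableAt ℂ E6c q) ∧
      q * deriv E2c q = (E2c q ^ 2 - E4c q) / 12 ∧
      q * deriv E4c q = (E2c q * E4c q - E6c q) / 3 ∧
      q * deriv E6c q = (E2c q * E6c q - E4c q ^ 2) / 2 := by
  intro q hq
  exact ⟨⟨(RamanujanAn.hasDerivAt_E2c hq).differentiableAt,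
      (RamanujanAn.hasDerivAt_E4c hq).differentiableAt,
      (RamanujanAn.hasDerivAt_E6c hq).differentiableAt⟩,
    RamanujanAn.eq1 hq, RamanujanAn.eq2 hq, RamanujanAn.eq3 hq⟩
end

section
/- (Farkas–Kra cubic identity) For every τ in the upper half-plane ℍ, θ[1/3,1/3](τ)³ + θ[1/3,5/3](τ)³ = θ[1/3,1](τ)³ and e^{πi/3}·θ[1/3,1/3](τ)³ + e^{2πi/3}·θ[1/3,5/3](τ)³ = θ[1,1/3](τ)³. -/
open Complex

namespace Stmt17Aux

noncomputable def trm (a b τ : ℂ) (n : ℤ) : ℂ :=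
  Complex.exp (2 * Real.pi * I * ((1 / 2) * ((n : ℂ) + a) ^ 2 * τ + ((n : ℂ) + a) * b))

noncomputable def FF (a b τ : ℂ) (p : ℤ × ℤ × ℤ) : ℂ :=
  trm a b τ p.1 * trm a b τ p.2.1 * trm a b τ p.2.2

lemma trm_summable_norm (a b : ℂ) {τ : ℂ} (hτ : 0 < τ.im) :
    Summable fun n : ℤ => ‖trm a b τ n‖ := by
  have h : ∀ n : ℤ, trm a b τ n =
      jacobiTheta₂_term n (a * τ + b) τ * Complex.exp (Real.pi * I * a ^ 2 * τ + 2 * Real.pi * I * (a * b)) := by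
    intro n
    rw [trm, jacobiTheta₂_term, ← Complex.exp_add]
    congr 1
    ring
  have h2 : Summable fun n : ℤ => jacobiTheta₂_term n (a * τ + b) τ *
      Complex.exp (Real.pi * I * a ^ 2 * τ + 2 * Real.pi * I * (a * b)) :=
    ((summable_jacobiTheta₂_term_iff (a * τ + b) τ).mpr hτ).mul_right _
  rw [summable_norm_iff]
  exact h2.congr fun n => (h n).symm

lemma FF_summable_norm (a b : ℂ) {τ : ℂ} (hτ : 0 < τ.im) :
    Summable fun p : ℤ × ℤ × ℤ => ‖FF a b τ p‖ := by
  have h1 := trm_summable_norm a b hτ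
  have := h1.mul_norm (h1.mul_norm h1)
  exact this.congr fun p => by rw [FF, mul_assoc]

lemma FF_summable (a b : ℂ) {τ : ℂ} (hτ : 0 < τ.im) : Summable (FF a b τ) :=
  (FF_summable_norm a b hτ).of_norm

lemma theta_cube (a b : ℂ) {τ : ℂ} (hτ : 0 < τ.im) :
    (∑' n : ℤ, trm a b τ n) ^ 3 = ∑' p : ℤ × ℤ × ℤ, FF a b τ p := by
  have h1 := trm_summable_norm a b hτ
  have h23 : ((∑' n : ℤ, trm a b τ n) * ∑' n : ℤ, trm a b τ n)
      = ∑' q : ℤ × ℤ, trm a b τ q.1 * trm a b τ q.2 :=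
    tsum_mul_tsum_of_summable_norm h1 h1
  have h123 : ((∑' n : ℤ, trm a b τ n) * ∑' q : ℤ × ℤ, trm a b τ q.1 * trm a b τ q.2)
      = ∑' p : ℤ × ℤ × ℤ, trm a b τ p.1 * (trm a b τ p.2.1 * trm a b τ p.2.2) :=
    tsum_mul_tsum_of_summable_norm h1 (h1.mul_norm h1)
  calc (∑' n : ℤ, trm a b τ n) ^ 3
      = (∑' n : ℤ, trm a b τ n) * ((∑' n : ℤ, trm a b τ n) * ∑' n : ℤ, trm a b τ n) := by ring
    _ = ∑' p : ℤ × ℤ × ℤ, FF a b τ p := by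
        rw [h23, h123]; exact tsum_congr fun p => by rw [FF]; ring



@[reducible] def NN (p : ℤ × ℤ × ℤ) : ℤ := p.1 + p.2.1 + p.2.2

def psi (p : ℤ × ℤ × ℤ) : ℤ × ℤ × ℤ :=
  if NN p % 3 = 1 then
    ((p.1 - 2 * p.2.1 - 2 * p.2.2 - 1) / 3, (-2 * p.1 + p.2.1 - 2 * p.2.2 - 1) / 3,
      (-2 * p.1 - 2 * p.2.1 + p.2.2 - 1) / 3)
  else p

def negP (p : ℤ × ℤ × ℤ) : ℤ × ℤ × ℤ := (-1 - p.1, -1 - p.2.1, -1 - p.2.2)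

def beta (p : ℤ × ℤ × ℤ) : ℤ × ℤ × ℤ :=
  if NN p % 3 = 2 then
    ((-p.1 + 2 * p.2.1 + 2 * p.2.2 - 1) / 3, (2 * p.1 - p.2.1 + 2 * p.2.2 - 1) / 3,
      (2 * p.1 + 2 * p.2.1 - p.2.2 - 1) / 3)
  else if NN p % 3 = 1 then
    ((-p.1 + 2 * p.2.1 + 2 * p.2.2 + 1) / 3, (2 * p.1 - p.2.1 + 2 * p.2.2 + 1) / 3,
      (2 * p.1 + 2 * p.2.1 - p.2.2 + 1) / 3)
  else p

lemma psi_invol : Function.Involutive psi := by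
  rintro ⟨x, y, z⟩
  simp only [psi, NN]
  by_cases h : (x + y + z) % 3 = 1
  · rw [if_pos h]
    simp only
    rw [if_pos (by omega)]
    exact Prod.ext (by simp only; omega) (Prod.ext (by simp only; omega) (by simp only; omega))
  · rw [if_neg h, if_neg h]

lemma negP_invol : Function.Involutive negP := by
  rintro ⟨x, y, z⟩
  simp only [negP]
  exact Prod.ext (by simp only; omega) (Prod.ext (by simp only; omega) (by simp only; omega))

lemma beta_invol : Function.Involutive beta := by
  rintro ⟨x, y, z⟩
  simp only [beta, NN]
  by_cases h2 : (x + y + z) % 3 = 2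
  · rw [if_pos h2]
    simp only
    rw [if_neg (by omega), if_pos (by omega)]
    exact Prod.ext (by simp only; omega) (Prod.ext (by simp only; omega) (by simp only; omega))
  · rw [if_neg h2]
    by_cases h1 : (x + y + z) % 3 = 1
    · rw [if_pos h1]
      simp only
      rw [if_pos (by omega)]
      exact Prod.ext (by simp only; omega) (Prod.ext (by simp only; omega) (by simp only; omega))
    · rw [if_neg h1, if_neg h2, if_neg h1]

lemma om6 : Complex.exp (2 * Real.pi * I / 12) ^ 6 = -1 := by
  rw [← Complex.exp_nat_mul]
  rw [show ((6 : ℕ) : ℂ) * (2 * Real.pi * I / 12) = Real.pi * I by push_cast; ring]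
  exact Complex.exp_pi_mul_I

lemma om_min : Complex.exp (2 * Real.pi * I / 12) ^ 4 -
    Complex.exp (2 * Real.pi * I / 12) ^ 2 + 1 = 0 := by
  have h2 : Complex.exp (2 * Real.pi * I / 12) ^ 2 = 1 / 2 + (Real.sqrt 3 / 2 : ℝ) * I := by
    rw [← Complex.exp_nat_mul]
    rw [show ((2 : ℕ) : ℂ) * (2 * Real.pi * I / 12) = (Real.pi / 3 : ℝ) * I by push_cast; ring]
    rw [Complex.exp_mul_I]
    rw [← Complex.ofReal_cos, ← Complex.ofReal_sin]
    rw [Real.cos_pi_div_three, Real.sin_pi_div_three]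
    norm_num
  have h4 : Complex.exp (2 * Real.pi * I / 12) ^ 4 =
      (Complex.exp (2 * Real.pi * I / 12) ^ 2) ^ 2 := by ring
  have h3 : ((Real.sqrt 3 : ℝ) : ℂ) ^ 2 = 3 := by
    rw [← Complex.ofReal_pow, Real.sq_sqrt (by norm_num : (3:ℝ) ≥ 0)]
    norm_num
  rw [h4, h2]
  push_cast
  linear_combination (I ^ 2 / 4) * h3 + (3 / 4 : ℂ) * Complex.I_sq


lemma FF_val (a b τ : ℂ) (x y z : ℤ) {C : ℂ} {m : ℤ} {k : ℕ}
    (hE : Real.pi * I * τ * (((x:ℂ) + a) ^ 2 + ((y:ℂ) + a) ^ 2 + ((z:ℂ) + a) ^ 2) +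
        2 * Real.pi * I * ((((x:ℂ) + (y:ℂ) + (z:ℂ)) + 3 * a) * b)
      = C + (m : ℂ) * (2 * Real.pi * I) + (k : ℂ) * (2 * Real.pi * I / 12)) :
    FF a b τ (x, y, z) = Complex.exp C * Complex.exp (2 * Real.pi * I / 12) ^ k := by
  have h1 : FF a b τ (x, y, z) =
      Complex.exp (C + (m : ℂ) * (2 * Real.pi * I) + (k : ℂ) * (2 * Real.pi * I / 12)) := by
    simp only [FF, trm]
    rw [← Complex.exp_add, ← Complex.exp_add, ← hE]
    congr 1
    push_cast
    ring
  rw [h1, Complex.exp_add, Complex.exp_add, Complex.exp_int_mul_two_pi_mul_I, mul_one,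
    Complex.exp_nat_mul]

lemma key1 (τ : ℂ) (p : ℤ × ℤ × ℤ) :
    FF (1/6) (1/6) τ (psi p) + FF (1/6) (5/6) τ (psi p) - FF (1/6) (1/2) τ (psi p)
      = -(FF (1/6) (1/6) τ p + FF (1/6) (5/6) τ p - FF (1/6) (1/2) τ p) := by
  obtain ⟨x, y, z⟩ := p
  by_cases h : (x + y + z) % 3 = 1
  · obtain ⟨t, ht⟩ : ∃ t, x + y + z = 3 * t + 1 := ⟨(x + y + z) / 3, by omega⟩
    have ct : (t : ℂ) = ((x:ℂ) + (y:ℂ) + (z:ℂ) - 1) / 3 := by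
      have h' : ((x:ℂ) + (y:ℂ) + (z:ℂ)) = 3 * (t:ℂ) + 1 := by
        exact_mod_cast congrArg (fun n : ℤ => (n:ℂ)) ht
      linear_combination -h' / 3
    obtain ⟨q1, hq1⟩ : ∃ q, x - 2 * y - 2 * z - 1 = 3 * q := ⟨(x - 2 * y - 2 * z - 1) / 3, by omega⟩
    obtain ⟨q2, hq2⟩ : ∃ q, -2 * x + y - 2 * z - 1 = 3 * q := ⟨(-2 * x + y - 2 * z - 1) / 3, by omega⟩
    obtain ⟨q3, hq3⟩ : ∃ q, -2 * x - 2 * y + z - 1 = 3 * q := ⟨(-2 * x - 2 * y + z - 1) / 3, by omega⟩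
    have hpsi : psi (x, y, z) = (q1, q2, q3) := by
      simp only [psi, NN]
      rw [if_pos h]
      exact Prod.ext (by simp only; omega) (Prod.ext (by simp only; omega) (by simp only; omega))
    have c1 : (q1 : ℂ) = ((x:ℂ) - 2 * (y:ℂ) - 2 * (z:ℂ) - 1) / 3 := by
      have h' : ((x:ℂ) - 2 * (y:ℂ) - 2 * (z:ℂ) - 1) = 3 * (q1:ℂ) := by
        exact_mod_cast congrArg (fun n : ℤ => (n:ℂ)) hq1
      linear_combination -h' / 3
    have c2 : (q2 : ℂ) = (-2 * (x:ℂ) + (y:ℂ) - 2 * (z:ℂ) - 1) / 3 := by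
      have h' : (-2 * (x:ℂ) + (y:ℂ) - 2 * (z:ℂ) - 1) = 3 * (q2:ℂ) := by
        exact_mod_cast congrArg (fun n : ℤ => (n:ℂ)) hq2
      linear_combination -h' / 3
    have c3 : (q3 : ℂ) = (-2 * (x:ℂ) - 2 * (y:ℂ) + (z:ℂ) - 1) / 3 := by
      have h' : (-2 * (x:ℂ) - 2 * (y:ℂ) + (z:ℂ) - 1) = 3 * (q3:ℂ) := by
        exact_mod_cast congrArg (fun n : ℤ => (n:ℂ)) hq3
      linear_combination -h' / 3
    rw [hpsi]
    have T1 : FF (1/6) (1/6) τ (q1, q2, q3) = Complex.exp (Real.pi * I * τ * (((x:ℂ) + 1/6) ^ 2 + ((y:ℂ) + 1/6) ^ 2 + ((z:ℂ) + 1/6) ^ 2) + Real.pi * I * (t:ℂ)) * Complex.exp (2 * Real.pi * I / 12) ^ 9 :=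
      FF_val _ _ _ _ _ _ (m := -t - 1) (by push_cast; rw [c1, c2, c3, ct]; ring)
    have T2 : FF (1/6) (5/6) τ (q1, q2, q3) = Complex.exp (Real.pi * I * τ * (((x:ℂ) + 1/6) ^ 2 + ((y:ℂ) + 1/6) ^ 2 + ((z:ℂ) + 1/6) ^ 2) + Real.pi * I * (t:ℂ)) * Complex.exp (2 * Real.pi * I / 12) ^ 9 :=
      FF_val _ _ _ _ _ _ (m := -3 * t - 2) (by push_cast; rw [c1, c2, c3, ct]; ring)
    have T3 : FF (1/6) (1/2) τ (q1, q2, q3) = Complex.exp (Real.pi * I * τ * (((x:ℂ) + 1/6) ^ 2 + ((y:ℂ) + 1/6) ^ 2 + ((z:ℂ) + 1/6) ^ 2) + Real.pi * I * (t:ℂ)) * Complex.exp (2 * Real.pi * I / 12) ^ 3 :=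
      FF_val _ _ _ _ _ _ (m := -2 * t - 1) (by push_cast; rw [c1, c2, c3, ct]; ring)
    have S1 : FF (1/6) (1/6) τ (x, y, z) = Complex.exp (Real.pi * I * τ * (((x:ℂ) + 1/6) ^ 2 + ((y:ℂ) + 1/6) ^ 2 + ((z:ℂ) + 1/6) ^ 2) + Real.pi * I * (t:ℂ)) * Complex.exp (2 * Real.pi * I / 12) ^ 3 :=
      FF_val _ _ _ _ _ _ (m := 0) (by push_cast; rw [ct]; ring)
    have S2 : FF (1/6) (5/6) τ (x, y, z) = Complex.exp (Real.pi * I * τ * (((x:ℂ) + 1/6) ^ 2 + ((y:ℂ) + 1/6) ^ 2 + ((z:ℂ) + 1/6) ^ 2) + Real.pi * I * (t:ℂ)) * Complex.exp (2 * Real.pi * I / 12) ^ 3 :=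
      FF_val _ _ _ _ _ _ (m := 2 * t + 1) (by push_cast; rw [ct]; ring)
    have S3 : FF (1/6) (1/2) τ (x, y, z) = Complex.exp (Real.pi * I * τ * (((x:ℂ) + 1/6) ^ 2 + ((y:ℂ) + 1/6) ^ 2 + ((z:ℂ) + 1/6) ^ 2) + Real.pi * I * (t:ℂ)) * Complex.exp (2 * Real.pi * I / 12) ^ 9 :=
      FF_val _ _ _ _ _ _ (m := t) (by push_cast; rw [ct]; ring)
    rw [T1, T2, T3, S1, S2, S3]
    linear_combination Complex.exp (Real.pi * I * τ * (((x:ℂ) + 1/6) ^ 2 + ((y:ℂ) + 1/6) ^ 2 + ((z:ℂ) + 1/6) ^ 2) + Real.pi * I * (t:ℂ)) * Complex.exp (2 * Real.pi * I / 12) ^ 3 * om6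
  · have hpsi : psi (x, y, z) = (x, y, z) := by
      simp only [psi, NN]
      rw [if_neg h]
    rw [hpsi]
    by_cases h0 : (x + y + z) % 3 = 0
    · obtain ⟨t, ht⟩ : ∃ t, x + y + z = 3 * t + 0 := ⟨(x + y + z) / 3, by omega⟩
      have ct : (t : ℂ) = ((x:ℂ) + (y:ℂ) + (z:ℂ) - 0) / 3 := by
        have h' : ((x:ℂ) + (y:ℂ) + (z:ℂ)) = 3 * (t:ℂ) + 0 := by
          exact_mod_cast congrArg (fun n : ℤ => (n:ℂ)) ht
        linear_combination -h' / 3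
      have S1 : FF (1/6) (1/6) τ (x, y, z) = Complex.exp (Real.pi * I * τ * (((x:ℂ) + 1/6) ^ 2 + ((y:ℂ) + 1/6) ^ 2 + ((z:ℂ) + 1/6) ^ 2) + Real.pi * I * (t:ℂ)) * Complex.exp (2 * Real.pi * I / 12) ^ 1 :=
        FF_val _ _ _ _ _ _ (m := 0) (by push_cast; rw [ct]; ring)
      have S2 : FF (1/6) (5/6) τ (x, y, z) = Complex.exp (Real.pi * I * τ * (((x:ℂ) + 1/6) ^ 2 + ((y:ℂ) + 1/6) ^ 2 + ((z:ℂ) + 1/6) ^ 2) + Real.pi * I * (t:ℂ)) * Complex.exp (2 * Real.pi * I / 12) ^ 5 :=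
        FF_val _ _ _ _ _ _ (m := 2 * t) (by push_cast; rw [ct]; ring)
      have S3 : FF (1/6) (1/2) τ (x, y, z) = Complex.exp (Real.pi * I * τ * (((x:ℂ) + 1/6) ^ 2 + ((y:ℂ) + 1/6) ^ 2 + ((z:ℂ) + 1/6) ^ 2) + Real.pi * I * (t:ℂ)) * Complex.exp (2 * Real.pi * I / 12) ^ 3 :=
        FF_val _ _ _ _ _ _ (m := t) (by push_cast; rw [ct]; ring)
      rw [S1, S2, S3]
      linear_combination 2 * Complex.exp (Real.pi * I * τ * (((x:ℂ) + 1/6) ^ 2 + ((y:ℂ) + 1/6) ^ 2 + ((z:ℂ) + 1/6) ^ 2) + Real.pi * I * (t:ℂ)) * Complex.exp (2 * Real.pi * I / 12) * om_min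
    · obtain ⟨t, ht⟩ : ∃ t, x + y + z = 3 * t + 2 := ⟨(x + y + z) / 3, by omega⟩
      have ct : (t : ℂ) = ((x:ℂ) + (y:ℂ) + (z:ℂ) - 2) / 3 := by
        have h' : ((x:ℂ) + (y:ℂ) + (z:ℂ)) = 3 * (t:ℂ) + 2 := by
          exact_mod_cast congrArg (fun n : ℤ => (n:ℂ)) ht
        linear_combination -h' / 3
      have S1 : FF (1/6) (1/6) τ (x, y, z) = Complex.exp (Real.pi * I * τ * (((x:ℂ) + 1/6) ^ 2 + ((y:ℂ) + 1/6) ^ 2 + ((z:ℂ) + 1/6) ^ 2) + Real.pi * I * (t:ℂ)) * Complex.exp (2 * Real.pi * I / 12) ^ 5 :=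
        FF_val _ _ _ _ _ _ (m := 0) (by push_cast; rw [ct]; ring)
      have S2 : FF (1/6) (5/6) τ (x, y, z) = Complex.exp (Real.pi * I * τ * (((x:ℂ) + 1/6) ^ 2 + ((y:ℂ) + 1/6) ^ 2 + ((z:ℂ) + 1/6) ^ 2) + Real.pi * I * (t:ℂ)) * Complex.exp (2 * Real.pi * I / 12) ^ 1 :=
        FF_val _ _ _ _ _ _ (m := 2 * t + 2) (by push_cast; rw [ct]; ring)
      have S3 : FF (1/6) (1/2) τ (x, y, z) = Complex.exp (Real.pi * I * τ * (((x:ℂ) + 1/6) ^ 2 + ((y:ℂ) + 1/6) ^ 2 + ((z:ℂ) + 1/6) ^ 2) + Real.pi * I * (t:ℂ)) * Complex.exp (2 * Real.pi * I / 12) ^ 3 :=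
        FF_val _ _ _ _ _ _ (m := t + 1) (by push_cast; rw [ct]; ring)
      rw [S1, S2, S3]
      linear_combination 2 * Complex.exp (Real.pi * I * τ * (((x:ℂ) + 1/6) ^ 2 + ((y:ℂ) + 1/6) ^ 2 + ((z:ℂ) + 1/6) ^ 2) + Real.pi * I * (t:ℂ)) * Complex.exp (2 * Real.pi * I / 12) * om_min

lemma key2 (τ : ℂ) (p : ℤ × ℤ × ℤ) :
    Complex.exp (2 * Real.pi * I / 12) ^ 2 * FF (1/6) (1/6) τ (psi p) + Complex.exp (2 * Real.pi * I / 12) ^ 4 * FF (1/6) (5/6) τ (psi p)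
      = if NN p % 3 = 1 then -(Complex.exp (2 * Real.pi * I / 12) ^ 2 * FF (1/6) (1/6) τ p + Complex.exp (2 * Real.pi * I / 12) ^ 4 * FF (1/6) (5/6) τ p)
        else Complex.exp (2 * Real.pi * I / 12) ^ 2 * FF (1/6) (1/6) τ p + Complex.exp (2 * Real.pi * I / 12) ^ 4 * FF (1/6) (5/6) τ p := by
  obtain ⟨x, y, z⟩ := p
  by_cases h : (x + y + z) % 3 = 1
  · rw [if_pos (show NN (x, y, z) % 3 = 1 from h)]
    obtain ⟨t, ht⟩ : ∃ t, x + y + z = 3 * t + 1 := ⟨(x + y + z) / 3, by omega⟩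
    have ct : (t : ℂ) = ((x:ℂ) + (y:ℂ) + (z:ℂ) - 1) / 3 := by
      have h' : ((x:ℂ) + (y:ℂ) + (z:ℂ)) = 3 * (t:ℂ) + 1 := by
        exact_mod_cast congrArg (fun n : ℤ => (n:ℂ)) ht
      linear_combination -h' / 3
    obtain ⟨q1, hq1⟩ : ∃ q, x - 2 * y - 2 * z - 1 = 3 * q := ⟨(x - 2 * y - 2 * z - 1) / 3, by omega⟩
    obtain ⟨q2, hq2⟩ : ∃ q, -2 * x + y - 2 * z - 1 = 3 * q := ⟨(-2 * x + y - 2 * z - 1) / 3, by omega⟩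
    obtain ⟨q3, hq3⟩ : ∃ q, -2 * x - 2 * y + z - 1 = 3 * q := ⟨(-2 * x - 2 * y + z - 1) / 3, by omega⟩
    have hpsi : psi (x, y, z) = (q1, q2, q3) := by
      simp only [psi, NN]
      rw [if_pos h]
      exact Prod.ext (by simp only; omega) (Prod.ext (by simp only; omega) (by simp only; omega))
    have c1 : (q1 : ℂ) = ((x:ℂ) - 2 * (y:ℂ) - 2 * (z:ℂ) - 1) / 3 := by
      have h' : ((x:ℂ) - 2 * (y:ℂ) - 2 * (z:ℂ) - 1) = 3 * (q1:ℂ) := by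
        exact_mod_cast congrArg (fun n : ℤ => (n:ℂ)) hq1
      linear_combination -h' / 3
    have c2 : (q2 : ℂ) = (-2 * (x:ℂ) + (y:ℂ) - 2 * (z:ℂ) - 1) / 3 := by
      have h' : (-2 * (x:ℂ) + (y:ℂ) - 2 * (z:ℂ) - 1) = 3 * (q2:ℂ) := by
        exact_mod_cast congrArg (fun n : ℤ => (n:ℂ)) hq2
      linear_combination -h' / 3
    have c3 : (q3 : ℂ) = (-2 * (x:ℂ) - 2 * (y:ℂ) + (z:ℂ) - 1) / 3 := by
      have h' : (-2 * (x:ℂ) - 2 * (y:ℂ) + (z:ℂ) - 1) = 3 * (q3:ℂ) := by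
        exact_mod_cast congrArg (fun n : ℤ => (n:ℂ)) hq3
      linear_combination -h' / 3
    rw [hpsi]
    have T1 : FF (1/6) (1/6) τ (q1, q2, q3) = Complex.exp (Real.pi * I * τ * (((x:ℂ) + 1/6) ^ 2 + ((y:ℂ) + 1/6) ^ 2 + ((z:ℂ) + 1/6) ^ 2) + Real.pi * I * (t:ℂ)) * Complex.exp (2 * Real.pi * I / 12) ^ 9 :=
      FF_val _ _ _ _ _ _ (m := -t - 1) (by push_cast; rw [c1, c2, c3, ct]; ring)
    have T2 : FF (1/6) (5/6) τ (q1, q2, q3) = Complex.exp (Real.pi * I * τ * (((x:ℂ) + 1/6) ^ 2 + ((y:ℂ) + 1/6) ^ 2 + ((z:ℂ) + 1/6) ^ 2) + Real.pi * I * (t:ℂ)) * Complex.exp (2 * Real.pi * I / 12) ^ 9 :=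
      FF_val _ _ _ _ _ _ (m := -3 * t - 2) (by push_cast; rw [c1, c2, c3, ct]; ring)
    have S1 : FF (1/6) (1/6) τ (x, y, z) = Complex.exp (Real.pi * I * τ * (((x:ℂ) + 1/6) ^ 2 + ((y:ℂ) + 1/6) ^ 2 + ((z:ℂ) + 1/6) ^ 2) + Real.pi * I * (t:ℂ)) * Complex.exp (2 * Real.pi * I / 12) ^ 3 :=
      FF_val _ _ _ _ _ _ (m := 0) (by push_cast; rw [ct]; ring)
    have S2 : FF (1/6) (5/6) τ (x, y, z) = Complex.exp (Real.pi * I * τ * (((x:ℂ) + 1/6) ^ 2 + ((y:ℂ) + 1/6) ^ 2 + ((z:ℂ) + 1/6) ^ 2) + Real.pi * I * (t:ℂ)) * Complex.exp (2 * Real.pi * I / 12) ^ 3 :=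
      FF_val _ _ _ _ _ _ (m := 2 * t + 1) (by push_cast; rw [ct]; ring)
    rw [T1, T2, S1, S2]
    linear_combination (Complex.exp (Real.pi * I * τ * (((x:ℂ) + 1/6) ^ 2 + ((y:ℂ) + 1/6) ^ 2 + ((z:ℂ) + 1/6) ^ 2) + Real.pi * I * (t:ℂ)) * Complex.exp (2 * Real.pi * I / 12) ^ 5 + Complex.exp (Real.pi * I * τ * (((x:ℂ) + 1/6) ^ 2 + ((y:ℂ) + 1/6) ^ 2 + ((z:ℂ) + 1/6) ^ 2) + Real.pi * I * (t:ℂ)) * Complex.exp (2 * Real.pi * I / 12) ^ 7) * om6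
  · rw [if_neg (show ¬ NN (x, y, z) % 3 = 1 from h)]
    have hpsi : psi (x, y, z) = (x, y, z) := by
      simp only [psi, NN]
      rw [if_neg h]
    rw [hpsi]

lemma key3 (τ : ℂ) (p : ℤ × ℤ × ℤ) (h : NN p % 3 = 0) :
    FF (1/2) (1/6) τ p + FF (1/2) (1/6) τ (negP p) = 0 := by
  obtain ⟨x, y, z⟩ := p
  simp only [NN] at h
  have hneg : negP (x, y, z) = (-1 - x, -1 - y, -1 - z) := rfl
  rw [hneg]
  obtain ⟨t, ht⟩ : ∃ t, x + y + z = 3 * t + 0 := ⟨(x + y + z) / 3, by omega⟩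
  have ct : (t : ℂ) = ((x:ℂ) + (y:ℂ) + (z:ℂ) - 0) / 3 := by
    have h' : ((x:ℂ) + (y:ℂ) + (z:ℂ)) = 3 * (t:ℂ) + 0 := by
      exact_mod_cast congrArg (fun n : ℤ => (n:ℂ)) ht
    linear_combination -h' / 3
  have S1 : FF (1/2) (1/6) τ (x, y, z) = Complex.exp (Real.pi * I * τ * (((x:ℂ) + 1/2) ^ 2 + ((y:ℂ) + 1/2) ^ 2 + ((z:ℂ) + 1/2) ^ 2) + Real.pi * I * (t:ℂ)) * Complex.exp (2 * Real.pi * I / 12) ^ 3 :=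
    FF_val _ _ _ _ _ _ (m := 0) (by push_cast; rw [ct]; ring)
  have S2 : FF (1/2) (1/6) τ (-1 - x, -1 - y, -1 - z) = Complex.exp (Real.pi * I * τ * (((x:ℂ) + 1/2) ^ 2 + ((y:ℂ) + 1/2) ^ 2 + ((z:ℂ) + 1/2) ^ 2) + Real.pi * I * (t:ℂ)) * Complex.exp (2 * Real.pi * I / 12) ^ 9 :=
    FF_val _ _ _ _ _ _ (m := -t - 1) (by push_cast; rw [ct]; ring)
  rw [S1, S2]
  linear_combination Complex.exp (Real.pi * I * τ * (((x:ℂ) + 1/2) ^ 2 + ((y:ℂ) + 1/2) ^ 2 + ((z:ℂ) + 1/2) ^ 2) + Real.pi * I * (t:ℂ)) * Complex.exp (2 * Real.pi * I / 12) ^ 3 * om6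

lemma key4 (τ : ℂ) (p : ℤ × ℤ × ℤ) :
    (if NN p % 3 = 1 then 0 else Complex.exp (2 * Real.pi * I / 12) ^ 2 * FF (1/6) (1/6) τ p + Complex.exp (2 * Real.pi * I / 12) ^ 4 * FF (1/6) (5/6) τ p)
      = if NN (beta p) % 3 = 1 then FF (1/2) (1/6) τ (beta p) + FF (1/2) (1/6) τ (negP (beta p))
        else 0 := by
  obtain ⟨x, y, z⟩ := p
  by_cases h2 : (x + y + z) % 3 = 2
  · rw [if_neg (show ¬ NN (x, y, z) % 3 = 1 by simp only [NN]; omega)]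
    obtain ⟨t, ht⟩ : ∃ t, x + y + z = 3 * t + 2 := ⟨(x + y + z) / 3, by omega⟩
    have ct : (t : ℂ) = ((x:ℂ) + (y:ℂ) + (z:ℂ) - 2) / 3 := by
      have h' : ((x:ℂ) + (y:ℂ) + (z:ℂ)) = 3 * (t:ℂ) + 2 := by
        exact_mod_cast congrArg (fun n : ℤ => (n:ℂ)) ht
      linear_combination -h' / 3
    obtain ⟨q1, hq1⟩ : ∃ q, -x + 2 * y + 2 * z - 1 = 3 * q := ⟨(-x + 2 * y + 2 * z - 1) / 3, by omega⟩
    obtain ⟨q2, hq2⟩ : ∃ q, 2 * x - y + 2 * z - 1 = 3 * q := ⟨(2 * x - y + 2 * z - 1) / 3, by omega⟩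
    obtain ⟨q3, hq3⟩ : ∃ q, 2 * x + 2 * y - z - 1 = 3 * q := ⟨(2 * x + 2 * y - z - 1) / 3, by omega⟩
    have hbeta : beta (x, y, z) = (q1, q2, q3) := by
      simp only [beta, NN]
      rw [if_pos h2]
      exact Prod.ext (by simp only; omega) (Prod.ext (by simp only; omega) (by simp only; omega))
    rw [hbeta]
    rw [if_pos (show NN (q1, q2, q3) % 3 = 1 by simp only [NN]; omega)]
    have hneg : negP (q1, q2, q3) = (-1 - q1, -1 - q2, -1 - q3) := rfl
    rw [hneg]
    have c1 : (q1 : ℂ) = (-(x:ℂ) + 2 * (y:ℂ) + 2 * (z:ℂ) - 1) / 3 := by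
      have h' : (-(x:ℂ) + 2 * (y:ℂ) + 2 * (z:ℂ) - 1) = 3 * (q1:ℂ) := by
        exact_mod_cast congrArg (fun n : ℤ => (n:ℂ)) hq1
      linear_combination -h' / 3
    have c2 : (q2 : ℂ) = (2 * (x:ℂ) - (y:ℂ) + 2 * (z:ℂ) - 1) / 3 := by
      have h' : (2 * (x:ℂ) - (y:ℂ) + 2 * (z:ℂ) - 1) = 3 * (q2:ℂ) := by
        exact_mod_cast congrArg (fun n : ℤ => (n:ℂ)) hq2
      linear_combination -h' / 3
    have c3 : (q3 : ℂ) = (2 * (x:ℂ) + 2 * (y:ℂ) - (z:ℂ) - 1) / 3 := by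
      have h' : (2 * (x:ℂ) + 2 * (y:ℂ) - (z:ℂ) - 1) = 3 * (q3:ℂ) := by
        exact_mod_cast congrArg (fun n : ℤ => (n:ℂ)) hq3
      linear_combination -h' / 3
    have T1 : FF (1/2) (1/6) τ (q1, q2, q3) = Complex.exp (Real.pi * I * τ * (((x:ℂ) + 1/6) ^ 2 + ((y:ℂ) + 1/6) ^ 2 + ((z:ℂ) + 1/6) ^ 2) + Real.pi * I * (t:ℂ)) * Complex.exp (2 * Real.pi * I / 12) ^ 5 :=
      FF_val _ _ _ _ _ _ (m := 0) (by push_cast; rw [c1, c2, c3, ct]; ring)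
    have T2 : FF (1/2) (1/6) τ (-1 - q1, -1 - q2, -1 - q3) = Complex.exp (Real.pi * I * τ * (((x:ℂ) + 1/6) ^ 2 + ((y:ℂ) + 1/6) ^ 2 + ((z:ℂ) + 1/6) ^ 2) + Real.pi * I * (t:ℂ)) * Complex.exp (2 * Real.pi * I / 12) ^ 7 :=
      FF_val _ _ _ _ _ _ (m := -t - 1) (by push_cast; rw [c1, c2, c3, ct]; ring)
    have S1 : FF (1/6) (1/6) τ (x, y, z) = Complex.exp (Real.pi * I * τ * (((x:ℂ) + 1/6) ^ 2 + ((y:ℂ) + 1/6) ^ 2 + ((z:ℂ) + 1/6) ^ 2) + Real.pi * I * (t:ℂ)) * Complex.exp (2 * Real.pi * I / 12) ^ 5 :=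
      FF_val _ _ _ _ _ _ (m := 0) (by push_cast; rw [ct]; ring)
    have S2 : FF (1/6) (5/6) τ (x, y, z) = Complex.exp (Real.pi * I * τ * (((x:ℂ) + 1/6) ^ 2 + ((y:ℂ) + 1/6) ^ 2 + ((z:ℂ) + 1/6) ^ 2) + Real.pi * I * (t:ℂ)) * Complex.exp (2 * Real.pi * I / 12) ^ 1 :=
      FF_val _ _ _ _ _ _ (m := 2 * t + 2) (by push_cast; rw [ct]; ring)
    rw [T1, T2, S1, S2]
    ring
  · by_cases h1 : (x + y + z) % 3 = 1
    · rw [if_pos (show NN (x, y, z) % 3 = 1 from h1)]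
      obtain ⟨q1, hq1⟩ : ∃ q, -x + 2 * y + 2 * z + 1 = 3 * q := ⟨(-x + 2 * y + 2 * z + 1) / 3, by omega⟩
      obtain ⟨q2, hq2⟩ : ∃ q, 2 * x - y + 2 * z + 1 = 3 * q := ⟨(2 * x - y + 2 * z + 1) / 3, by omega⟩
      obtain ⟨q3, hq3⟩ : ∃ q, 2 * x + 2 * y - z + 1 = 3 * q := ⟨(2 * x + 2 * y - z + 1) / 3, by omega⟩
      have hbeta : beta (x, y, z) = (q1, q2, q3) := by
        simp only [beta, NN]
        rw [if_neg (by omega), if_pos h1]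
        exact Prod.ext (by simp only; omega) (Prod.ext (by simp only; omega) (by simp only; omega))
      rw [hbeta]
      rw [if_neg (show ¬ NN (q1, q2, q3) % 3 = 1 by simp only [NN]; omega)]
    · rw [if_neg (show ¬ NN (x, y, z) % 3 = 1 from h1)]
      have hbeta : beta (x, y, z) = (x, y, z) := by
        simp only [beta, NN]
        rw [if_neg h2, if_neg h1]
      rw [hbeta]
      rw [if_neg (show ¬ NN (x, y, z) % 3 = 1 from h1)]
      obtain ⟨t, ht⟩ : ∃ t, x + y + z = 3 * t + 0 := ⟨(x + y + z) / 3, by omega⟩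
      have ct : (t : ℂ) = ((x:ℂ) + (y:ℂ) + (z:ℂ) - 0) / 3 := by
        have h' : ((x:ℂ) + (y:ℂ) + (z:ℂ)) = 3 * (t:ℂ) + 0 := by
          exact_mod_cast congrArg (fun n : ℤ => (n:ℂ)) ht
        linear_combination -h' / 3
      have S1 : FF (1/6) (1/6) τ (x, y, z) = Complex.exp (Real.pi * I * τ * (((x:ℂ) + 1/6) ^ 2 + ((y:ℂ) + 1/6) ^ 2 + ((z:ℂ) + 1/6) ^ 2) + Real.pi * I * (t:ℂ)) * Complex.exp (2 * Real.pi * I / 12) ^ 1 :=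
        FF_val _ _ _ _ _ _ (m := 0) (by push_cast; rw [ct]; ring)
      have S2 : FF (1/6) (5/6) τ (x, y, z) = Complex.exp (Real.pi * I * τ * (((x:ℂ) + 1/6) ^ 2 + ((y:ℂ) + 1/6) ^ 2 + ((z:ℂ) + 1/6) ^ 2) + Real.pi * I * (t:ℂ)) * Complex.exp (2 * Real.pi * I / 12) ^ 5 :=
        FF_val _ _ _ _ _ _ (m := 2 * t) (by push_cast; rw [ct]; ring)
      rw [S1, S2]
      linear_combination Complex.exp (Real.pi * I * τ * (((x:ℂ) + 1/6) ^ 2 + ((y:ℂ) + 1/6) ^ 2 + ((z:ℂ) + 1/6) ^ 2) + Real.pi * I * (t:ℂ)) * Complex.exp (2 * Real.pi * I / 12) ^ 3 * om6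

lemma key3' (τ : ℂ) (p : ℤ × ℤ × ℤ) :
    FF (1/2) (1/6) τ p + FF (1/2) (1/6) τ (negP p)
      = (if NN p % 3 = 1 then FF (1/2) (1/6) τ p + FF (1/2) (1/6) τ (negP p) else 0)
        + (if NN (negP p) % 3 = 1 then
            FF (1/2) (1/6) τ (negP p) + FF (1/2) (1/6) τ (negP (negP p)) else 0) := by
  have hnn : NN (negP p) = -NN p - 3 := by
    obtain ⟨x, y, z⟩ := p
    simp only [NN, negP]
    ring
  rw [negP_invol p]
  by_cases h1 : NN p % 3 = 1
  · rw [if_pos h1, if_neg (by rw [hnn]; omega)]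
    ring
  · by_cases h2 : NN p % 3 = 2
    · rw [if_neg h1, if_pos (by rw [hnn]; omega)]
      ring
    · rw [if_neg h1, if_neg (by rw [hnn]; omega)]
      rw [key3 τ p (by omega)]
      ring

lemma tsum_psi (f : ℤ × ℤ × ℤ → ℂ) : ∑' p, f (psi p) = ∑' p, f p := by
  have := (Function.Involutive.toPerm psi psi_invol).tsum_eq f
  simpa [Function.Involutive.coe_toPerm] using this

lemma tsum_negP (f : ℤ × ℤ × ℤ → ℂ) : ∑' p, f (negP p) = ∑' p, f p := by
  have := (Function.Involutive.toPerm negP negP_invol).tsum_eq f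
  simpa [Function.Involutive.coe_toPerm] using this

lemma tsum_beta (f : ℤ × ℤ × ℤ → ℂ) : ∑' p, f (beta p) = ∑' p, f p := by
  have := (Function.Involutive.toPerm beta beta_invol).tsum_eq f
  simpa [Function.Involutive.coe_toPerm] using this

lemma summable_psi {f : ℤ × ℤ × ℤ → ℂ} (hf : Summable f) : Summable fun p => f (psi p) := by
  have := (Function.Involutive.toPerm psi psi_invol).summable_iff.mpr hf
  simp only [Function.Involutive.coe_toPerm] at this
  exact this

lemma summable_negP {f : ℤ × ℤ × ℤ → ℂ} (hf : Summable f) : Summable fun p => f (negP p) := by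
  have := (Function.Involutive.toPerm negP negP_invol).summable_iff.mpr hf
  simp only [Function.Involutive.coe_toPerm] at this
  exact this

set_option maxHeartbeats 1000000 in
lemma ident1 (τ : ℂ) (hτ : 0 < τ.im) :
    (∑' p : ℤ × ℤ × ℤ, FF (1/6) (1/6) τ p) + (∑' p : ℤ × ℤ × ℤ, FF (1/6) (5/6) τ p)
      = ∑' p : ℤ × ℤ × ℤ, FF (1/6) (1/2) τ p := by
  have hs1 := FF_summable (1/6) (1/6) hτ
  have hs2 := FF_summable (1/6) (5/6) hτ
  have hs3 := FF_summable (1/6) (1/2) hτ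
  have hzero : ∑' p : ℤ × ℤ × ℤ,
      (FF (1/6) (1/6) τ p + FF (1/6) (5/6) τ p - FF (1/6) (1/2) τ p) = 0 := by
    have hre := tsum_psi (fun p => FF (1/6) (1/6) τ p + FF (1/6) (5/6) τ p - FF (1/6) (1/2) τ p)
    have hneg : ∑' p : ℤ × ℤ × ℤ,
        (FF (1/6) (1/6) τ (psi p) + FF (1/6) (5/6) τ (psi p) - FF (1/6) (1/2) τ (psi p))
        = ∑' p : ℤ × ℤ × ℤ,
          -(FF (1/6) (1/6) τ p + FF (1/6) (5/6) τ p - FF (1/6) (1/2) τ p) :=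
      tsum_congr (key1 τ)
    rw [tsum_neg] at hneg
    rw [hre] at hneg
    linear_combination hneg / 2
  rw [(hs1.add hs2).tsum_sub hs3, hs1.tsum_add hs2] at hzero
  linear_combination hzero

set_option maxHeartbeats 1000000 in
lemma ident2 (τ : ℂ) (hτ : 0 < τ.im) :
    Complex.exp (2 * Real.pi * I / 12) ^ 2 * (∑' p : ℤ × ℤ × ℤ, FF (1/6) (1/6) τ p) +
      Complex.exp (2 * Real.pi * I / 12) ^ 4 * (∑' p : ℤ × ℤ × ℤ, FF (1/6) (5/6) τ p) =
      ∑' p : ℤ × ℤ × ℤ, FF (1/2) (1/6) τ p := by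
  have hs1 := FF_summable (1/6) (1/6) hτ
  have hs2 := FF_summable (1/6) (5/6) hτ
  have hsg := FF_summable (1/2) (1/6) hτ
  have hsgneg : Summable fun p => FF (1/2) (1/6) τ (negP p) := summable_negP hsg
  have hsf : Summable fun p : ℤ × ℤ × ℤ =>
      Complex.exp (2 * Real.pi * I / 12) ^ 2 * FF (1/6) (1/6) τ p +
        Complex.exp (2 * Real.pi * I / 12) ^ 4 * FF (1/6) (5/6) τ p :=
    (hs1.mul_left _).add (hs2.mul_left _)
  have hsfpsi := summable_psi hsf
  -- Summability of gh
  have hsgh : Summable fun p : ℤ × ℤ × ℤ =>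
      (if NN p % 3 = 1 then FF (1/2) (1/6) τ p + FF (1/2) (1/6) τ (negP p) else 0) := by
    apply Summable.of_norm_bounded
      (g := fun p => ‖FF (1/2) (1/6) τ p + FF (1/2) (1/6) τ (negP p)‖)
      (summable_norm_iff.mpr (hsg.add hsgneg))
    intro p
    by_cases hc : NN p % 3 = 1
    · rw [if_pos hc]
    · rw [if_neg hc, norm_zero]
      exact norm_nonneg _
  have hsghneg : Summable fun p : ℤ × ℤ × ℤ =>
      (if NN (negP p) % 3 = 1 then
        FF (1/2) (1/6) τ (negP p) + FF (1/2) (1/6) τ (negP (negP p)) else 0) :=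
    summable_negP hsgh
  -- Step 2 : ∑ f = ∑ ft
  have step2 : ∑' p : ℤ × ℤ × ℤ,
      (Complex.exp (2 * Real.pi * I / 12) ^ 2 * FF (1/6) (1/6) τ p +
        Complex.exp (2 * Real.pi * I / 12) ^ 4 * FF (1/6) (5/6) τ p)
      = ∑' p : ℤ × ℤ × ℤ,
        (if NN p % 3 = 1 then 0 else
          Complex.exp (2 * Real.pi * I / 12) ^ 2 * FF (1/6) (1/6) τ p +
            Complex.exp (2 * Real.pi * I / 12) ^ 4 * FF (1/6) (5/6) τ p) := by
    have hre := tsum_psi (fun p => Complex.exp (2 * Real.pi * I / 12) ^ 2 * FF (1/6) (1/6) τ p +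
        Complex.exp (2 * Real.pi * I / 12) ^ 4 * FF (1/6) (5/6) τ p)
    have hsplit : ∀ p : ℤ × ℤ × ℤ,
        (Complex.exp (2 * Real.pi * I / 12) ^ 2 * FF (1/6) (1/6) τ p +
          Complex.exp (2 * Real.pi * I / 12) ^ 4 * FF (1/6) (5/6) τ p) +
        (Complex.exp (2 * Real.pi * I / 12) ^ 2 * FF (1/6) (1/6) τ (psi p) +
          Complex.exp (2 * Real.pi * I / 12) ^ 4 * FF (1/6) (5/6) τ (psi p))
        = 2 * (if NN p % 3 = 1 then 0 else
            Complex.exp (2 * Real.pi * I / 12) ^ 2 * FF (1/6) (1/6) τ p +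
              Complex.exp (2 * Real.pi * I / 12) ^ 4 * FF (1/6) (5/6) τ p) := by
      intro p
      rw [key2 τ p]
      by_cases hc : NN p % 3 = 1
      · rw [if_pos hc, if_pos hc]
        ring
      · rw [if_neg hc, if_neg hc]
        ring
    have h2 := tsum_congr (L := SummationFilter.unconditional _) hsplit
    rw [tsum_mul_left, hsf.tsum_add hsfpsi, hre] at h2
    linear_combination h2 / 2
  -- Step 3 : ∑ g = ∑ gh
  have step3 : ∑' p : ℤ × ℤ × ℤ, FF (1/2) (1/6) τ p
      = ∑' p : ℤ × ℤ × ℤ,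
        (if NN p % 3 = 1 then FF (1/2) (1/6) τ p + FF (1/2) (1/6) τ (negP p) else 0) := by
    have hgneg := tsum_negP (fun p => FF (1/2) (1/6) τ p)
    have hghneg := tsum_negP (fun p =>
      (if NN p % 3 = 1 then FF (1/2) (1/6) τ p + FF (1/2) (1/6) τ (negP p) else 0))
    have e2 := tsum_congr (L := SummationFilter.unconditional _) (key3' τ)
    rw [hsg.tsum_add hsgneg, hsgh.tsum_add hsghneg, hgneg, hghneg] at e2
    linear_combination e2 / 2
  -- Step 4 : ∑ ft = ∑ gh
  have step4 : ∑' p : ℤ × ℤ × ℤ,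
      (if NN p % 3 = 1 then 0 else
        Complex.exp (2 * Real.pi * I / 12) ^ 2 * FF (1/6) (1/6) τ p +
          Complex.exp (2 * Real.pi * I / 12) ^ 4 * FF (1/6) (5/6) τ p)
      = ∑' p : ℤ × ℤ × ℤ,
        (if NN p % 3 = 1 then FF (1/2) (1/6) τ p + FF (1/2) (1/6) τ (negP p) else 0) := by
    have hb := tsum_beta (fun p =>
      (if NN p % 3 = 1 then FF (1/2) (1/6) τ p + FF (1/2) (1/6) τ (negP p) else 0))
    rw [← hb]
    exact tsum_congr (key4 τ)
  have hlin : ∑' p : ℤ × ℤ × ℤ,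
      (Complex.exp (2 * Real.pi * I / 12) ^ 2 * FF (1/6) (1/6) τ p +
        Complex.exp (2 * Real.pi * I / 12) ^ 4 * FF (1/6) (5/6) τ p)
      = Complex.exp (2 * Real.pi * I / 12) ^ 2 * (∑' p : ℤ × ℤ × ℤ, FF (1/6) (1/6) τ p) +
        Complex.exp (2 * Real.pi * I / 12) ^ 4 * (∑' p : ℤ × ℤ × ℤ, FF (1/6) (5/6) τ p) := by
    rw [(hs1.mul_left _).tsum_add (hs2.mul_left _), tsum_mul_left, tsum_mul_left]
  rw [← hlin, step2, step4, ← step3]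

lemma theta_as_trm (e e' : ℝ) (τ : ℂ) : thetaC e e' τ = ∑' n : ℤ, trm ((e : ℂ) / 2) ((e' : ℂ) / 2) τ n :=
  rfl

lemma theta_cube' (e e' : ℝ) {τ : ℂ} (hτ : 0 < τ.im) (a b : ℂ)
    (ha : ((e : ℂ)) / 2 = a) (hb : ((e' : ℂ)) / 2 = b) :
    thetaC e e' τ ^ 3 = ∑' p : ℤ × ℤ × ℤ, FF a b τ p := by
  rw [theta_as_trm, ha, hb, theta_cube a b hτ]

end Stmt17Aux

set_option maxHeartbeats 1000000 in
open Stmt17Aux in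
theorem stmt17 :
    ∀ τ : ℂ, 0 < τ.im →
      thetaC (1 / 3) (1 / 3) τ ^ 3 + thetaC (1 / 3) (5 / 3) τ ^ 3 =
        thetaC (1 / 3) 1 τ ^ 3 ∧
      Complex.exp (Real.pi * I / 3) * thetaC (1 / 3) (1 / 3) τ ^ 3 +
          Complex.exp (2 * Real.pi * I / 3) * thetaC (1 / 3) (5 / 3) τ ^ 3 =
        thetaC 1 (1 / 3) τ ^ 3 := by
  intro τ hτ
  have c13 : (((1 / 3 : ℝ) : ℂ)) / 2 = (1 / 6 : ℂ) := by push_cast; norm_num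
  have c53 : (((5 / 3 : ℝ) : ℂ)) / 2 = (5 / 6 : ℂ) := by push_cast; norm_num
  have c1 : (((1 : ℝ) : ℂ)) / 2 = (1 / 2 : ℂ) := by norm_num
  have h11 := theta_cube' (1 / 3) (1 / 3) hτ (1 / 6) (1 / 6) c13 c13
  have h15 := theta_cube' (1 / 3) (5 / 3) hτ (1 / 6) (5 / 6) c13 c53
  have h1h := theta_cube' (1 / 3) 1 hτ (1 / 6) (1 / 2) c13 c1
  have hg := theta_cube' 1 (1 / 3) hτ (1 / 2) (1 / 6) c1 c13
  constructor
  · rw [h11, h15, h1h]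
    exact ident1 τ hτ
  · rw [h11, h15, hg]
    have hW2 : Complex.exp (Real.pi * I / 3) = Complex.exp (2 * Real.pi * I / 12) ^ 2 := by
      rw [← Complex.exp_nat_mul]
      congr 1
      push_cast
      ring
    have hW4 : Complex.exp (2 * Real.pi * I / 3) = Complex.exp (2 * Real.pi * I / 12) ^ 4 := by
      rw [← Complex.exp_nat_mul]
      congr 1
      push_cast
      ring
    rw [hW2, hW4]
    exact ident2 τ hτ
end
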